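/- arXiv:1203.0334 — 5 statements merged into one kernel-verified Lean document; each statement's English description precedes it below -/
import Mathlib

section
/- If an alphabet A contains at least three letters, then the set of square-free words over A is infinite. -/
namespace SqFreePaper

variable {A : Type*}

/-- A word is square-free if it contains no nonempty factor of the form `s ++ s`. -/
def IsSquareFreeWord (w : List A) : Prop :=
  ∀ u s v : List A, w = u ++ s ++ s ++ v → s = []

/-- One-step rewriting relation associated with a system of defining relations `π`. -/
def OneStep (π : List A → List A → Prop) (x y : List A) : Prop :=
  ∃ r s u v : List A, x = r ++ u ++ s ∧ y = r ++ v ++ s ∧ (π u v ∨ π v u)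

/-- The congruence `=_π` generated by `π`: reflexive-transitive closure of one-step rewriting. -/
def EqRel (π : List A → List A → Prop) : List A → List A → Prop :=
  Relation.ReflTransGen (OneStep π)

/-- `w` is square-free relative to `π`: every word in its `=_π`-class is square-free. -/
def SFRel (π : List A → List A → Prop) (w : List A) : Prop :=
  ∀ z, EqRel π w z → IsSquareFreeWord z

/-- Union of two systems of defining relations. -/
def PiRel (σ ρ : List A → List A → Prop) (x y : List A) : Prop := σ x y ∨ ρ x y

/-- The set of defining words of a system `σ`. -/
def DWords (σ : List A → List A → Prop) : Set (List A) :=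
  {x | ∃ y, σ x y ∨ σ y x}

/-- The closure of `D_σ` under the congruence `=_ρ`. -/
def ClosureD (σ ρ : List A → List A → Prop) : Set (List A) :=
  {x | ∃ w ∈ DWords σ, EqRel ρ w x}

/-- The system `{(u_i, u_j) : i < j}` determined by a finite family of words. -/
def FamilyRel {n : ℕ} (u : Fin n → List A) (x y : List A) : Prop :=
  ∃ i j : Fin n, i < j ∧ x = u i ∧ y = u j

/-- `x ~ y` iff both lie in `D̄_σ` or both lie in `D̄_ρ`. -/
def Sim (σ ρ : List A → List A → Prop) (x y : List A) : Prop :=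
  (x ∈ ClosureD σ ρ ∧ y ∈ ClosureD σ ρ) ∨ (x ∈ ClosureD ρ σ ∧ y ∈ ClosureD ρ σ)

/-- `D_τ = D̄_σ ∪ D̄_ρ`. -/
def DTau (σ ρ : List A → List A → Prop) : Set (List A) :=
  ClosureD σ ρ ∪ ClosureD ρ σ

/-- The concatenation `x_a ++ x_{a+1} ++ ⋯ ++ x_{a+len-1}`. -/
def wordSeg (x : ℕ → List A) (a len : ℕ) : List A :=
  ((List.range' a len).map x).flatten

/-- Standing hypotheses of the paper: `D̄_σ`, `D̄_ρ` are finite, nonempty, disjoint,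
and closed under `=_σ`, `=_ρ` respectively. -/
def SettingHyps (σ ρ : List A → List A → Prop) : Prop :=
  (ClosureD σ ρ).Finite ∧ (ClosureD ρ σ).Finite ∧
  (ClosureD σ ρ).Nonempty ∧ (ClosureD ρ σ).Nonempty ∧
  (ClosureD σ ρ ∩ ClosureD ρ σ = ∅) ∧
  (∀ x ∈ ClosureD σ ρ, ∀ y, EqRel σ x y → y ∈ ClosureD σ ρ) ∧
  (∀ x ∈ ClosureD ρ σ, ∀ y, EqRel ρ x y → y ∈ ClosureD ρ σ)

/-- `x_1, …, x_n` (with complementary members `p_i`, `q_i`) is a linear decomposition. -/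
def IsLinDecomp (σ ρ : List A → List A → Prop) (n : ℕ) (x p q : ℕ → List A) : Prop :=
  1 ≤ n ∧
  (∀ i, 1 ≤ i → i ≤ n → x i ≠ []) ∧
  (∃ u v : ℕ → List A,
    (∀ i, 1 < i → i ≤ n → Sim σ ρ (p i ++ x i ++ q i) (q (i-1) ++ u i)) ∧
    (∀ i, 1 ≤ i → i < n → Sim σ ρ (p i ++ x i ++ q i) (v i ++ p (i+1)))) ∧
  (∀ i, 1 ≤ i → i < n → q i = [] ∨ p (i+1) = []) ∧
  p 1 = [] ∧ q n = [] ∧ (n = 1 → x 1 ∈ DTau σ ρ)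

/-- `Lin(n)`: words with a linear decomposition of at most `n` members. -/
def LinSet (σ ρ : List A → List A → Prop) (n : ℕ) : Set (List A) :=
  {w | ∃ m, 1 ≤ m ∧ m ≤ n ∧ ∃ x p q, IsLinDecomp σ ρ m x p q ∧ w = wordSeg x 1 m}

/-- `Lin = ⋃ₙ Lin(n)`: linearly decomposable words. -/
def LinAll (σ ρ : List A → List A → Prop) : Set (List A) :=
  {w | ∃ n, w ∈ LinSet σ ρ n}

/-- Occurrence `(r, d, s)` contains occurrence `(p, e, q)` (of the same word)
iff `|r| ≤ |p|` and `|s| ≤ |q|`. -/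
def Contained (p q r s : List A) : Prop := r.length ≤ p.length ∧ s.length ≤ q.length

/-- Two occurrences in `w` overlap iff some occurrence of a nonempty word is
contained in both. -/
def Overlap (w p q r s : List A) : Prop :=
  ∃ a f b : List A, f ≠ [] ∧ w = a ++ f ++ b ∧ Contained a b p q ∧ Contained a b r s

/-- `(p, e, q)` is a maximal occurrence in `w` of a word `e` in the set `L`. -/
def MaximalOcc (L : Set (List A)) (w p e q : List A) : Prop :=
  w = p ++ e ++ q ∧ e ∈ L ∧
  ∀ r d s, w = r ++ d ++ s → d ∈ L → Contained p q r s → r = p ∧ d = e ∧ s = q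

/-- Thue–Morse sequence: parity of binary digit sum. -/
def tm (n : ℕ) : Bool := (Nat.digits 2 n).sum % 2 == 1

lemma tm_even (m : ℕ) : tm (2 * m) = tm m := by
  rcases Nat.eq_zero_or_pos m with rfl | hm
  · rfl
  · unfold tm
    rw [Nat.digits_def' (by norm_num : 1 < 2) (by omega : 0 < 2 * m)]
    simp [Nat.mul_mod_right, Nat.mul_div_cancel_left _ (by norm_num : 0 < 2)]

lemma tm_odd (m : ℕ) : tm (2 * m + 1) = !(tm m) := by
  unfold tm
  rw [Nat.digits_def' (by norm_num : 1 < 2) (by omega : 0 < 2 * m + 1)]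
  have h1 : (2 * m + 1) % 2 = 1 := by omega
  have h2 : (2 * m + 1) / 2 = m := by omega
  rw [h1, h2]
  simp only [List.sum_cons]
  rcases Nat.mod_two_eq_zero_or_one ((Nat.digits 2 m).sum) with h | h <;>
    simp [Nat.add_mod, h]

lemma tm_pair (m : ℕ) : tm (2 * m) ≠ tm (2 * m + 1) := by
  rw [tm_even, tm_odd]; cases tm m <;> simp

lemma tm_pair' (n : ℕ) (h : n % 2 = 0) : tm n ≠ tm (n + 1) := by
  obtain ⟨m, rfl⟩ : ∃ m, n = 2 * m := ⟨n / 2, by omega⟩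
  exact tm_pair m

lemma no_three (k : ℕ) : ¬ (tm k = tm (k + 1) ∧ tm (k + 1) = tm (k + 2)) := by
  rintro ⟨h1, h2⟩
  rcases Nat.mod_two_eq_zero_or_one k with h | h
  · exact tm_pair' k h h1
  · exact tm_pair' (k + 1) (by omega) h2

lemma overlapfree : ∀ ℓ, 1 ≤ ℓ → ∀ i, ¬ (∀ k ≤ ℓ, tm (i + k) = tm (i + k + ℓ)) := by
  intro ℓ
  induction ℓ using Nat.strong_induction_on with
  | _ ℓ IH =>
  intro hℓ i H
  rcases Nat.even_or_odd ℓ with ⟨ℓ', hℓ'⟩ | ⟨ℓ', hℓ'⟩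
  · -- even case: ℓ = 2 ℓ'
    have hℓ'1 : 1 ≤ ℓ' := by omega
    have hlt : ℓ' < ℓ := by omega
    rcases Nat.even_or_odd i with ⟨j, hj⟩ | ⟨j, hj⟩
    · apply IH ℓ' hlt hℓ'1 j
      intro k hk
      have := H (2 * k) (by omega)
      have e1 : i + 2 * k = 2 * (j + k) := by omega
      have e2 : i + 2 * k + ℓ = 2 * (j + k + ℓ') := by omega
      rwa [e2, e1, tm_even, tm_even] at this
    · apply IH ℓ' hlt hℓ'1 j
      intro k hk
      have := H (2 * k) (by omega)
      have e1 : i + 2 * k = 2 * (j + k) + 1 := by omega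
      have e2 : i + 2 * k + ℓ = 2 * (j + k + ℓ') + 1 := by omega
      rw [e2, e1, tm_odd, tm_odd] at this
      simpa using this
  · -- odd case: ℓ = 2 ℓ' + 1
    -- alternation on [i, i + 2ℓ - 1]
    have alt : ∀ n, i ≤ n → n + 1 ≤ i + 2 * ℓ → tm n ≠ tm (n + 1) := by
      intro n hn1 hn2
      rcases Nat.even_or_odd n with ⟨m, hm⟩ | ⟨m, hm⟩
      · have : n = 2 * m := by omega
        rw [this]; exact tm_pair m
      · -- n odd
        by_cases hcase : n + 1 ≤ i + ℓ
        · obtain ⟨k, hk⟩ : ∃ k, n = i + k := ⟨n - i, by omega⟩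
          have h1 := H k (by omega)
          have h2 := H (k + 1) (by omega)
          rw [show i + k = n by omega] at h1
          rw [show i + (k + 1) = n + 1 by omega] at h2
          have hp := tm_pair' (n + ℓ) (by omega)
          rw [h1, h2, show n + 1 + ℓ = n + ℓ + 1 by omega]
          exact hp
        · obtain ⟨k, hk⟩ : ∃ k, n = i + k + ℓ := ⟨n - ℓ - i, by omega⟩
          have h1 := H k (by omega)
          have h2 := H (k + 1) (by omega)
          rw [show i + k + ℓ = n by omega] at h1
          rw [show i + (k + 1) + ℓ = n + 1 by omega] at h2
          rw [show i + (k + 1) = i + k + 1 by omega] at h2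
          have hp := tm_pair' (i + k) (by omega)
          rw [← h1, ← h2]
          exact hp
    rcases Nat.eq_or_lt_of_le hℓ with h1 | h3
    · -- ℓ = 1
      have hH := H 0 (by omega)
      have ha := alt i (le_refl i) (by omega)
      simp only [Nat.add_zero] at hH
      rw [← h1] at hH
      exact ha hH
    · -- ℓ ≥ 2, and odd so ℓ ≥ 3
      have hℓ3 : 3 ≤ ℓ := by omega
      obtain ⟨m, hm, hmi⟩ : ∃ m, (i = 2 * m ∨ i + 1 = 2 * m) ∧ i ≤ 2 * m := by
        rcases Nat.even_or_odd i with ⟨j, hj⟩ | ⟨j, hj⟩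
        · exact ⟨j, Or.inl (by omega), by omega⟩
        · exact ⟨j + 1, Or.inr (by omega), by omega⟩
      set e := 2 * m with he
      have a0 : tm e ≠ tm (e + 1) := alt e hmi (by omega)
      have a1 : tm (e + 1) ≠ tm (e + 2) := alt (e + 1) (by omega) (by omega)
      have a2 : tm (e + 2) ≠ tm (e + 3) := alt (e + 2) (by omega) (by omega)
      have a3 : tm (e + 3) ≠ tm (e + 4) := alt (e + 3) (by omega) (by omega)
      have bne : ∀ x y z : Bool, x ≠ y → y ≠ z → x = z := by decide
      have b1 : tm e = tm (e + 2) := bne _ _ _ a0 a1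
      have b2 : tm (e + 2) = tm (e + 4) := bne _ _ _ a2 a3
      apply no_three m
      constructor
      · have h' : tm (2 * m) = tm (2 * (m + 1)) := by
          rw [show 2 * (m + 1) = e + 2 by omega, ← he]; exact b1
        rwa [tm_even, tm_even] at h'
      · have h' : tm (2 * (m + 1)) = tm (2 * (m + 2)) := by
          rw [show 2 * (m + 1) = e + 2 by omega, show 2 * (m + 2) = e + 4 by omega]
          exact b2
        rwa [tm_even, tm_even] at h'

/-- The ternary square-free word derived from Thue–Morse. -/
def dd (n : ℕ) : Fin 3 := if tm n = tm (n + 1) then 1 else if tm (n + 1) then 2 else 0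

lemma dd_decode {x y : ℕ} (h : dd x = dd y) :
    (tm x = tm (x + 1) ∧ tm y = tm (y + 1)) ∨ (tm x = tm y ∧ tm (x + 1) = tm (y + 1)) := by
  unfold dd at h
  cases h1 : tm x <;> cases h2 : tm (x + 1) <;> cases h3 : tm y <;> cases h4 : tm (y + 1) <;>
    simp [h1, h2, h3, h4] at h ⊢

lemma dd_sqfree (i ℓ : ℕ) (hℓ : 1 ≤ ℓ) : ¬ (∀ k, k < ℓ → dd (i + k) = dd (i + ℓ + k)) := by
  intro H
  by_cases hone : ∃ k, k < ℓ ∧ tm (i + k) = tm (i + ℓ + k)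
  · have step : ∀ k, k < ℓ →
        ((tm (i + k) = tm (i + ℓ + k)) ↔ (tm (i + k + 1) = tm (i + ℓ + k + 1))) := by
      intro k hk
      rcases dd_decode (H k hk) with ⟨ha, hb⟩ | ⟨ha, hb⟩
      · rw [← ha, ← hb]
      · simp [ha, hb]
    have chain : ∀ k, k ≤ ℓ →
        ((tm (i + k) = tm (i + ℓ + k)) ↔ (tm (i + 0) = tm (i + ℓ + 0))) := by
      intro k
      induction k with
      | zero => intro _; exact Iff.rfl
      | succ k ih =>
        intro hk
        exact (step k (by omega)).symm.trans (ih (by omega))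
    obtain ⟨k₀, hk₀, hE⟩ := hone
    have E0 : tm (i + 0) = tm (i + ℓ + 0) := (chain k₀ (by omega)).mp hE
    apply overlapfree ℓ hℓ i
    intro k hk
    have := (chain k hk).mpr E0
    rwa [show i + ℓ + k = i + k + ℓ by omega] at this
  · push_neg at hone
    have left : ∀ k, k < ℓ → tm (i + k) = tm (i + k + 1) ∧ tm (i + ℓ + k) = tm (i + ℓ + k + 1) := by
      intro k hk
      rcases dd_decode (H k hk) with hgood | ⟨ha, _⟩
      · exact hgood
      · exact absurd ha (hone k hk)
    apply no_three i
    rcases Nat.lt_or_ge 1 ℓ with h2 | h2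
    · have a := (left 0 (by omega)).1
      have b := (left 1 (by omega)).1
      rw [show i + 0 + 1 = i + 1 by omega, show i + 0 = i by omega] at a
      rw [show i + 1 + 1 = i + 2 by omega] at b
      exact ⟨a, b⟩
    · have a := (left 0 (by omega)).1
      have b := (left 0 (by omega)).2
      have hℓ1 : ℓ = 1 := by omega
      rw [show i + 0 + 1 = i + 1 by omega, show i + 0 = i by omega] at a
      rw [hℓ1] at b
      rw [show i + 1 + 0 + 1 = i + 2 by omega, show i + 1 + 0 = i + 1 by omega] at b
      exact ⟨a, b⟩

/-- If an alphabet `A` contains at least three letters,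
then the set of square-free words over `A` is infinite. -/
theorem squarefree_infinite_of_three_letters {A : Type*}
    (h : ∃ f : Fin 3 → A, Function.Injective f) :
    {w : List A | IsSquareFreeWord w}.Infinite := by
  obtain ⟨f, hf⟩ := h
  apply Set.infinite_of_injective_forall_mem
    (f := fun N : ℕ => (List.range N).map (fun n => f (dd n)))
  · intro N M hNM
    simpa using congrArg List.length hNM
  · intro N
    simp only [Set.mem_setOf_eq]
    intro u s v hw
    by_contra hs
    have hL : 1 ≤ s.length := List.length_pos_iff.mpr hs
    set g : ℕ → A := fun n => f (dd n) with hg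
    set i := u.length with hi
    set L := s.length with hLdef
    have hlen : N = i + L + L + v.length := by
      have := congrArg List.length hw
      simp only [List.length_map, List.length_range, List.length_append] at this
      omega
    have key : ∀ j, j < N → (u ++ s ++ s ++ v)[j]? = some (g j) := by
      intro j hj
      rw [← hw]
      simp [List.getElem?_map, List.getElem?_range hj]
    have occ : ∀ k, k < L → g (i + k) = g (i + L + k) := by
      intro k hk
      have k1 := key (i + k) (by omega)
      have k2 := key (i + L + k) (by omega)
      rw [List.getElem?_append_left
            (show i + k < ((u ++ s) ++ s).length by simp only [List.length_append]; omega),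
          List.getElem?_append_left
            (show i + k < (u ++ s).length by simp only [List.length_append]; omega),
          List.getElem?_append_right (show u.length ≤ i + k by omega),
          show i + k - u.length = k by omega,
          List.getElem?_eq_getElem (show k < s.length by omega)] at k1
      rw [List.getElem?_append_left
            (show i + L + k < ((u ++ s) ++ s).length by simp only [List.length_append]; omega),
          List.getElem?_append_right
            (show (u ++ s).length ≤ i + L + k by simp only [List.length_append]; omega),
          show i + L + k - (u ++ s).length = k by simp only [List.length_append]; omega,
          List.getElem?_eq_getElem (show k < s.length by omega)] at k2
      exact Option.some.inj (k1.symm.trans k2)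
    apply dd_sqfree i L hL
    intro k hk
    exact hf (occ k hk)

end SqFreePaper
end

section
/- Let π be a system of defining relations on A* (an irreflexive binary relation on A*), and let P ⊆ A* be a decidable (recursive) set of words. If every word w whose equivalence class [w]_π (under the congruence generated by π) is contained in P has a finite equivalence class [w]_π, then the set P(A,π) = { w ∈ A* : [w]_π ⊆ P } is decidable, provided π itself is decidable and finitely branching in the sense that the one-step rewriting relation from any word yields a computable finite set. -/
namespace SqFreePaper

variable {A : Type*}

section RelativizationAux

/-! ### Auxiliary computability lemmas -/

theorem option_toList_computable {σ : Type*} [Primcodable σ] :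
    Computable (fun o : Option σ => o.toList) :=
  (Computable.option_casesOn Computable.id (Computable.const [])
    ((Computable.list_cons.comp Computable.snd (Computable.const [])).to₂)).of_eq
    fun o => by cases o <;> rfl

set_option maxHeartbeats 1000000 in
theorem computable_list_map {α β σ : Type*} [Primcodable α] [Primcodable β] [Primcodable σ]
    {f : α → List β} {g : α → β → σ}
    (hf : Computable f) (hg : Computable₂ g) :
    Computable fun a => (f a).map (g a) := by
  have key : ∀ (l : List β) (G : β → σ) (n : ℕ),
      Nat.rec (motive := fun _ => List σ) []
        (fun k s => s ++ ((l[k]?).map G).toList) n = (l.take n).map G := by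
    intro l G n
    induction n with
    | zero => simp
    | succ n ih =>
      show _ ++ _ = _
      rw [ih, List.take_succ]
      cases h : l[n]? <;> simp [h]
  have hopt : Computable fun p : α × (ℕ × List σ) => (f p.1)[p.2.1]? :=
    Computable.list_getElem?.comp (hf.comp Computable.fst) (Computable.fst.comp Computable.snd)
  have hgg : Computable₂ fun (p : α × (ℕ × List σ)) (b : β) => g p.1 b :=
    hg.comp (Computable.fst.comp Computable.fst) Computable.snd |>.to₂
  have hmap : Computable fun p : α × (ℕ × List σ) => ((f p.1)[p.2.1]?).map (g p.1) :=
    Computable.option_map hopt hgg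
  have htl : Computable fun p : α × (ℕ × List σ) => (((f p.1)[p.2.1]?).map (g p.1)).toList :=
    option_toList_computable.comp hmap
  have hh : Computable₂ fun (a : α) (p : ℕ × List σ) =>
      p.2 ++ (((f a)[p.1]?).map (g a)).toList :=
    (Computable.list_append.comp (Computable.snd.comp Computable.snd) htl).to₂
  have h1 : Computable fun a : α =>
      Nat.rec (motive := fun _ => List σ) []
        (fun k s => s ++ (((f a)[k]?).map (g a)).toList) ((f a).length) :=
    Computable.nat_rec (Computable.list_length.comp hf) (Computable.const []) hh
  exact h1.of_eq fun a => by rw [key]; simp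

/-- All words reachable from `w` by at most `n` rewriting steps (with repetitions). -/
def reachList (step : List A → List (List A)) (w : List A) (n : ℕ) : List (List A) :=
  Nat.rec [w] (fun _ s => s ++ (s.map step).flatten) n

theorem reachList_zero (step : List A → List (List A)) (w : List A) :
    reachList step w 0 = [w] := rfl

theorem reachList_succ (step : List A → List (List A)) (w : List A) (n : ℕ) :
    reachList step w (n+1)
      = reachList step w n ++ ((reachList step w n).map step).flatten := rfl

theorem mem_reachList_succ {step : List A → List (List A)} {w z : List A} {n : ℕ} :
    z ∈ reachList step w (n+1) ↔
      z ∈ reachList step w n ∨ ∃ y ∈ reachList step w n, z ∈ step y := by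
  simp [reachList_succ, List.mem_flatten, List.mem_map]

def fAnd (L : List Bool) : Bool := L.foldl (· && ·) true
def fOr (L : List Bool) : Bool := L.foldl (· || ·) false

theorem foldl_and (L : List Bool) (b : Bool) : L.foldl (· && ·) b = (b && L.all id) := by
  induction L generalizing b with
  | nil => simp
  | cons c L ih => simp [ih, Bool.and_assoc]

theorem foldl_or (L : List Bool) (b : Bool) : L.foldl (· || ·) b = (b || L.any id) := by
  induction L generalizing b with
  | nil => simp
  | cons c L ih => simp [ih, Bool.or_assoc]

theorem fAnd_eq_true (L : List Bool) : fAnd L = true ↔ ∀ b ∈ L, b = true := by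
  simp [fAnd, foldl_and, List.all_eq_true]

theorem fOr_eq_true (L : List Bool) : fOr L = true ↔ ∃ b ∈ L, b = true := by
  simp [fOr, foldl_or, List.any_eq_true]

/-- The checker: `some false` if a non-`P` word was found among the words reachable in
at most `n` steps; `some true` if all of them satisfy `P` and the search has stabilized;
`none` otherwise. -/
def chk [Primcodable A] (step : List A → List (List A)) (Pb : List A → Bool)
    (w : List A) (n : ℕ) : Option Bool :=
  bif fAnd ((reachList step w n).map Pb) then
    bif fAnd ((reachList step w (n+1)).map fun z =>
        fOr ((reachList step w n).map fun y =>
          decide (Encodable.encode y = Encodable.encode z))) then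
      some true
    else none
  else some false

theorem fAnd_primrec : Primrec fAnd :=
  Primrec.list_foldl Primrec.id (Primrec.const true)
    ((Primrec.dom_bool₂ (· && ·)).comp (Primrec.fst.comp Primrec.snd)
      (Primrec.snd.comp Primrec.snd)).to₂

theorem fOr_primrec : Primrec fOr :=
  Primrec.list_foldl Primrec.id (Primrec.const false)
    ((Primrec.dom_bool₂ (· || ·)).comp (Primrec.fst.comp Primrec.snd)
      (Primrec.snd.comp Primrec.snd)).to₂

theorem reachList_computable [Primcodable A] {step : List A → List (List A)}
    (hstep : Computable step) :
    Computable fun p : List A × ℕ => reachList step p.1 p.2 := by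
  have hmap : Computable fun q : (List A × ℕ) × (ℕ × List (List A)) =>
      (q.2.2.map step) :=
    computable_list_map (Computable.snd.comp Computable.snd)
      ((hstep.comp Computable.snd).to₂)
  have hh : Computable₂ fun (p : List A × ℕ) (q : ℕ × List (List A)) =>
      q.2 ++ (q.2.map step).flatten :=
    (Computable.list_append.comp (Computable.snd.comp Computable.snd)
      (Primrec.list_flatten.to_comp.comp hmap)).to₂
  have hg : Computable fun p : List A × ℕ => ([p.1] : List (List A)) :=
    Computable.list_cons.comp Computable.fst (Computable.const [])
  exact Computable.nat_rec Computable.snd hg hh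

theorem chk_computable [Primcodable A] {step : List A → List (List A)}
    (hstep : Computable step) {Pb : List A → Bool} (hPb : Computable Pb) :
    Computable₂ (chk step Pb) := by
  have hR : Computable fun p : List A × ℕ => reachList step p.1 p.2 :=
    reachList_computable hstep
  have hR' : Computable fun p : List A × ℕ => reachList step p.1 (p.2+1) :=
    hR.comp (Computable.pair Computable.fst (Computable.succ.comp Computable.snd))
  have c1 : Computable fun p : List A × ℕ => fAnd ((reachList step p.1 p.2).map Pb) :=
    fAnd_primrec.to_comp.comp (computable_list_map hR ((hPb.comp Computable.snd).to₂))
  have hdec : Computable₂ fun (q : (List A × ℕ) × List A) (y : List A) =>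
      decide (Encodable.encode y = Encodable.encode q.2) :=
    (Primrec.eq.comp (Primrec.encode.comp Primrec.snd)
      (Primrec.encode.comp (Primrec.snd.comp Primrec.fst))).decide.to_comp.to₂
  have hinner : Computable₂ fun (p : List A × ℕ) (z : List A) =>
      fOr ((reachList step p.1 p.2).map fun y =>
        decide (Encodable.encode y = Encodable.encode z)) :=
    (fOr_primrec.to_comp.comp
      (computable_list_map (hR.comp Computable.fst) hdec)).to₂
  have c2 : Computable fun p : List A × ℕ =>
      fAnd ((reachList step p.1 (p.2+1)).map fun z =>
        fOr ((reachList step p.1 p.2).map fun y =>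
          decide (Encodable.encode y = Encodable.encode z))) :=
    fAnd_primrec.to_comp.comp (computable_list_map hR' hinner)
  exact (Computable.cond c1
    (Computable.cond c2 (Computable.const (some true)) (Computable.const none))
    (Computable.const (some false))).to₂

end RelativizationAux

/-- relativization of a decidable set of words is decidable, provided
every word whose class is contained in the set has a finite class, `π` is decidable and
one-step rewriting is computably finitely branching. -/
theorem relativization_computable {A : Type*} [Primcodable A]
    (π : List A → List A → Prop) (hirr : ∀ x, ¬ π x x)
    (P : List A → Prop) (hP : ComputablePred P)
    (step : List A → List (List A)) (hstep : Computable step)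
    (hstepSpec : ∀ x y : List A, OneStep π x y ↔ y ∈ step x)
    (hfin : ∀ w : List A, (∀ z, EqRel π w z → P z) → {z | EqRel π w z}.Finite) :
    ComputablePred (fun w : List A => ∀ z, EqRel π w z → P z) := by
  classical
  obtain ⟨Pb, hPb, hPeq⟩ := ComputablePred.computable_iff.mp hP
  have hPiff : ∀ z, P z ↔ Pb z = true := by intro z; rw [hPeq]
  -- soundness of `reachList`
  have sound : ∀ (w : List A) (n : ℕ), ∀ z ∈ reachList step w n, EqRel π w z := by
    intro w n
    induction n with
    | zero =>
      intro z hz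
      rw [reachList_zero] at hz
      simp only [List.mem_singleton] at hz
      subst hz; exact Relation.ReflTransGen.refl
    | succ n ih =>
      intro z hz
      rcases mem_reachList_succ.mp hz with h | ⟨y, hy, hzy⟩
      · exact ih z h
      · exact Relation.ReflTransGen.tail (ih y hy) ((hstepSpec y z).mpr hzy)
  have mono : ∀ (w : List A) (m n : ℕ), m ≤ n →
      ∀ z ∈ reachList step w m, z ∈ reachList step w n := by
    intro w m n hmn
    induction hmn with
    | refl => exact fun z hz => hz
    | step _ ih =>
      intro z hz
      exact mem_reachList_succ.mpr (Or.inl (ih z hz))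
  have self_mem : ∀ (w : List A) (n : ℕ), w ∈ reachList step w n := by
    intro w n
    exact mono w 0 n (Nat.zero_le n) w (by rw [reachList_zero]; simp)
  have complete : ∀ (w z : List A), EqRel π w z → ∃ n, z ∈ reachList step w n := by
    intro w z hz
    induction hz with
    | refl => exact ⟨0, self_mem w 0⟩
    | tail _ h2 ih =>
      obtain ⟨n, hn⟩ := ih
      exact ⟨n + 1, mem_reachList_succ.mpr (Or.inr ⟨_, hn, (hstepSpec _ _).mp h2⟩)⟩
  have stab : ∀ (w : List A) (n : ℕ),
      (∀ z ∈ reachList step w (n+1), z ∈ reachList step w n) →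
      ∀ z, EqRel π w z → z ∈ reachList step w n := by
    intro w n hcl z hz
    induction hz with
    | refl => exact self_mem w n
    | tail _ h2 ih =>
      exact hcl _ (mem_reachList_succ.mpr (Or.inr ⟨_, ih, (hstepSpec _ _).mp h2⟩))
  -- correctness of the checker
  have correct : ∀ (w : List A) (n : ℕ) (b : Bool), chk step Pb w n = some b →
      b = decide (∀ z, EqRel π w z → P z) := by
    intro w n b hb
    unfold chk at hb
    cases h1 : fAnd ((reachList step w n).map Pb) with
    | false =>
      rw [h1] at hb
      simp only [Bool.cond_false, Option.some.injEq] at hb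
      subst hb
      have : ¬ (∀ z, EqRel π w z → P z) := by
        intro hall
        have : fAnd ((reachList step w n).map Pb) = true := by
          rw [fAnd_eq_true]
          intro b hbmem
          obtain ⟨z, hz, rfl⟩ := List.mem_map.mp hbmem
          exact (hPiff z).mp (hall z (sound w n z hz))
        rw [h1] at this; exact Bool.false_ne_true this
      exact (decide_eq_false this).symm
    | true =>
      rw [h1] at hb
      simp only [Bool.cond_true] at hb
      cases h2 : fAnd ((reachList step w (n+1)).map fun z =>
          fOr ((reachList step w n).map fun y =>
            decide (Encodable.encode y = Encodable.encode z))) with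
      | false => rw [h2] at hb; simp at hb
      | true =>
        rw [h2] at hb
        simp only [Bool.cond_true, Option.some.injEq] at hb
        subst hb
        have hcl : ∀ z ∈ reachList step w (n+1), z ∈ reachList step w n := by
          intro z hz
          have h2' := (fAnd_eq_true _).mp h2 _ (List.mem_map_of_mem hz)
          obtain ⟨b', hb'mem, hb'⟩ := (fOr_eq_true _).mp h2'
          obtain ⟨y, hy, rfl⟩ := List.mem_map.mp hb'mem
          have : y = z := Encodable.encode_injective (by simpa using hb')
          subst this; exact hy
        have hall : ∀ z, EqRel π w z → P z := by
          intro z hz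
          have hz' : z ∈ reachList step w n := stab w n hcl z hz
          exact (hPiff z).mpr ((fAnd_eq_true _).mp h1 _ (List.mem_map_of_mem hz'))
        exact (decide_eq_true hall).symm
  -- totality of the search
  have dom : ∀ w : List A, ∃ n b, chk step Pb w n = some b := by
    intro w
    by_cases hpw : ∀ z, EqRel π w z → P z
    · have hfin' := hfin w hpw
      have hstabn : ∃ n, ∀ z ∈ reachList step w (n+1), z ∈ reachList step w n := by
        by_contra hno
        push_neg at hno
        have hcard : ∀ n : ℕ, n + 1 ≤ (reachList step w n).toFinset.card := by
          intro n
          induction n with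
          | zero => rw [reachList_zero]; simp
          | succ n ih =>
            obtain ⟨z, hz1, hz2⟩ := hno n
            have hss : (reachList step w n).toFinset ⊂ (reachList step w (n+1)).toFinset := by
              constructor
              · intro y hy
                rw [List.mem_toFinset] at *
                exact mono w n (n+1) (Nat.le_succ n) y hy
              · intro hsup
                exact hz2 (List.mem_toFinset.mp (hsup (List.mem_toFinset.mpr hz1)))
            have := Finset.card_lt_card hss
            omega
        set N := hfin'.toFinset.card with hN
        have hsub : (reachList step w N).toFinset ⊆ hfin'.toFinset := by
          intro z hz
          rw [List.mem_toFinset] at hz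
          rw [Set.Finite.mem_toFinset]
          exact sound w N z hz
        have h1 := Finset.card_le_card hsub
        have h2 := hcard N
        omega
      obtain ⟨n, hn⟩ := hstabn
      refine ⟨n, true, ?_⟩
      have h1 : fAnd ((reachList step w n).map Pb) = true := by
        rw [fAnd_eq_true]
        intro b hbmem
        obtain ⟨z, hz, rfl⟩ := List.mem_map.mp hbmem
        exact (hPiff z).mp (hpw z (sound w n z hz))
      have h2 : fAnd ((reachList step w (n+1)).map fun z =>
          fOr ((reachList step w n).map fun y =>
            decide (Encodable.encode y = Encodable.encode z))) = true := by
        rw [fAnd_eq_true]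
        intro b hbmem
        obtain ⟨z, hz, rfl⟩ := List.mem_map.mp hbmem
        rw [fOr_eq_true]
        exact ⟨_, List.mem_map_of_mem (hn z hz), by simp⟩
      unfold chk
      rw [h1, h2]
      rfl
    · push_neg at hpw
      obtain ⟨z, hz, hnz⟩ := hpw
      obtain ⟨n, hzn⟩ := complete w z hz
      refine ⟨n, false, ?_⟩
      have h1 : fAnd ((reachList step w n).map Pb) = false := by
        rw [Bool.eq_false_iff]
        intro h
        exact hnz ((hPiff z).mpr ((fAnd_eq_true _).mp h _ (List.mem_map_of_mem hzn)))
      unfold chk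
      rw [h1]
      rfl
  -- assembly
  have hComp : Computable fun w : List A => decide (∀ z, EqRel π w z → P z) := by
    have hpartrec := Partrec.rfindOpt (chk_computable hstep hPb)
    apply hpartrec.of_eq_tot
    intro w
    obtain ⟨n, b, hb⟩ := dom w
    have hd : (Nat.rfindOpt (chk step Pb w)).Dom := Nat.rfindOpt_dom.2 ⟨n, b, hb⟩
    have hmem : (Nat.rfindOpt (chk step Pb w)).get hd ∈ Nat.rfindOpt (chk step Pb w) :=
      Part.get_mem hd
    obtain ⟨m, hm⟩ := Nat.rfindOpt_spec hmem
    have heq := correct w m _ (Option.mem_def.mp hm)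
    rw [← heq]
    exact hmem
  rw [ComputablePred.computable_iff]
  exact ⟨_, hComp, by funext w; simp⟩

end SqFreePaper
end

section
/- Let π = σ ∪ ρ be a system of defining relations where σ = {(u_i,u_j) : 1 ≤ i < j ≤ n} and ρ = {(v_k,v_l) : 1 ≤ k < l ≤ m} with pairwise distinct u_i and pairwise distinct v_k. If the closure D̄_σ of the set D_σ = {u_1,…,u_n} under the relation =_ρ is infinite, then every word w that is square-free relative to π has a finite equivalence class [w]_π. -/
namespace SqFreePaper

variable {A : Type*}

lemma split_of_le {x s y t : List A} (h : x ++ s = y ++ t) (hle : x.length ≤ y.length) :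
    ∃ e, y = x ++ e ∧ s = e ++ t := by
  rcases List.append_eq_append_iff.mp h with ⟨e, h1, h2⟩ | ⟨e, h1, h2⟩
  · exact ⟨e, h1, h2⟩
  · have hlen := congrArg List.length h1
    simp only [List.length_append] at hlen
    have he : e = [] := List.length_eq_zero_iff.mp (by omega)
    subst he
    exact ⟨[], by simpa using h1.symm, by simpa using h2.symm⟩

lemma step_vv {m : ℕ} {v : Fin m → List A} {k l : Fin m} (hkl : k ≠ l) (r s : List A) :
    OneStep (FamilyRel v) (r ++ v k ++ s) (r ++ v l ++ s) := by
  refine ⟨r, s, v k, v l, rfl, rfl, ?_⟩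
  rcases lt_or_gt_of_ne hkl with h | h
  · exact Or.inl ⟨k, l, h, rfl, rfl⟩
  · exact Or.inr ⟨l, k, h, rfl, rfl⟩

lemma disj_aux {m : ℕ} {v : Fin m → List A} (hv : Function.Injective v) {w z : List A}
    (hw : SFRel (FamilyRel v) w) (hz : EqRel (FamilyRel v) w z)
    {c₁ d₁ c₂ d₂ : List A} {k₁ k₂ : Fin m}
    (h₁ : z = c₁ ++ v k₁ ++ d₁) (h₂ : z = c₂ ++ v k₂ ++ d₂)
    (hle : c₁.length ≤ c₂.length) :
    c₁.length + (v k₁).length ≤ c₂.length ∨ c₂.length + (v k₂).length ≤ c₁.length ∨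
      (c₁ = c₂ ∧ k₁ = k₂ ∧ d₁ = d₂) := by
  have h0 : c₁ ++ (v k₁ ++ d₁) = c₂ ++ (v k₂ ++ d₂) := by
    simpa [List.append_assoc] using h₁.symm.trans h₂
  obtain ⟨e, hc₂, h3⟩ := split_of_le h0 hle
  have hc₂len := congrArg List.length hc₂
  simp only [List.length_append] at hc₂len
  by_cases hcase : (v k₁).length ≤ e.length
  · left; omega
  · push_neg at hcase
    obtain ⟨f, hf1, hf2⟩ := split_of_le h3.symm (le_of_lt hcase)
    have hf1len := congrArg List.length hf1
    simp only [List.length_append] at hf1len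
    have hf : f ≠ [] := by
      intro hfe
      rw [hfe] at hf1len
      simp at hf1len
      omega
    by_cases h5 : f.length ≤ (v k₂).length
    · obtain ⟨g, hg1, hg2⟩ := split_of_le hf2.symm h5
      have hg1len := congrArg List.length hg1
      simp only [List.length_append] at hg1len
      by_cases he : e = []
      · by_cases hg : g = []
        · right; right
          have hvv : v k₁ = v k₂ := by rw [hf1, hg1, he, hg]; simp
          exact ⟨by rw [hc₂, he]; simp, hv hvv, by rw [hg2, hg]; simp⟩
        · exfalso
          have hvv : v k₂ = v k₁ ++ g := by rw [hg1, hf1, he]; simp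
          have hne : k₁ ≠ k₂ := by
            intro hEq; rw [hEq] at hvv
            have := congrArg List.length hvv
            simp only [List.length_append] at this
            exact hg (List.length_eq_zero_iff.mp (by omega))
          have hst : OneStep (FamilyRel v) z (c₁ ++ v k₂ ++ d₁) := by
            rw [h₁]; exact step_vv hne c₁ d₁
          have hsq := hw _ (Relation.ReflTransGen.tail hz hst)
          have heq : c₁ ++ v k₂ ++ d₁ = (c₁ ++ v k₁) ++ g ++ g ++ d₂ := by
            rw [hvv, hg2]; simp [List.append_assoc]
          exact hg (hsq _ _ _ heq)
      · by_cases hg : g = []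
        · exfalso
          have hvv : v k₁ = e ++ v k₂ := by rw [hf1, hg1, hg]; simp
          have hne : k₂ ≠ k₁ := by
            intro hEq; rw [hEq] at hvv
            have := congrArg List.length hvv
            simp only [List.length_append] at this
            exact he (List.length_eq_zero_iff.mp (by omega))
          have hst : OneStep (FamilyRel v) z (c₂ ++ v k₁ ++ d₂) := by
            rw [h₂]; exact step_vv hne c₂ d₂
          have hsq := hw _ (Relation.ReflTransGen.tail hz hst)
          have heq : c₂ ++ v k₁ ++ d₂ = c₁ ++ e ++ e ++ (v k₂ ++ d₂) := by
            rw [hc₂, hvv]; simp [List.append_assoc]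
          exact he (hsq _ _ _ heq)
        · by_cases hkk : k₁ = k₂
          · exfalso
            have hvv : e ++ f = f ++ g := by rw [← hf1, hkk, hg1]
            have hsq := hw _ hz
            have heq : z = c₁ ++ e ++ e ++ (f ++ d₂) := by
              rw [h₁, hf1, hg2]
              have h9 : f ++ g = e ++ f := hvv.symm
              calc c₁ ++ (e ++ f) ++ (g ++ d₂) = c₁ ++ (e ++ (f ++ g) ++ d₂) := by
                    simp [List.append_assoc]
                _ = c₁ ++ (e ++ (e ++ f) ++ d₂) := by rw [h9]
                _ = c₁ ++ e ++ e ++ (f ++ d₂) := by simp [List.append_assoc]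
            exact he (hsq _ _ _ heq)
          · exfalso
            have hst : OneStep (FamilyRel v) z (c₁ ++ v k₂ ++ d₁) := by
              rw [h₁]; exact step_vv hkk c₁ d₁
            have hsq := hw _ (Relation.ReflTransGen.tail hz hst)
            have heq : c₁ ++ v k₂ ++ d₁ = (c₁ ++ f) ++ g ++ g ++ d₂ := by
              rw [hg1, hg2]; simp [List.append_assoc]
            exact hg (hsq _ _ _ heq)
    · push_neg at h5
      obtain ⟨h, hh1, hh2⟩ := split_of_le hf2 (le_of_lt h5)
      exfalso
      have hh1len := congrArg List.length hh1
      simp only [List.length_append] at hh1len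
      have hh : h ≠ [] := by
        intro hhe; rw [hhe] at hh1len; simp at hh1len; omega
      have hvv : v k₁ = e ++ v k₂ ++ h := by rw [hf1, hh1]; simp [List.append_assoc]
      have hne : k₂ ≠ k₁ := by
        intro hEq; rw [hEq] at hvv
        have := congrArg List.length hvv
        simp only [List.length_append] at this
        have : h.length = 0 ∧ e.length = 0 := by omega
        exact hh (List.length_eq_zero_iff.mp this.1)
      have hst : OneStep (FamilyRel v) z (c₂ ++ v k₁ ++ d₂) := by
        rw [h₂]; exact step_vv hne c₂ d₂
      have hsq := hw _ (Relation.ReflTransGen.tail hz hst)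
      have heq : c₂ ++ v k₁ ++ d₂ = (c₂ ++ e ++ v k₂) ++ h ++ h ++ d₁ := by
        rw [hvv, hh2]; simp [List.append_assoc]
      exact hh (hsq _ _ _ heq)

lemma disj {m : ℕ} {v : Fin m → List A} (hv : Function.Injective v) {w z : List A}
    (hw : SFRel (FamilyRel v) w) (hz : EqRel (FamilyRel v) w z)
    {c₁ d₁ c₂ d₂ : List A} {k₁ k₂ : Fin m}
    (h₁ : z = c₁ ++ v k₁ ++ d₁) (h₂ : z = c₂ ++ v k₂ ++ d₂) :
    c₁.length + (v k₁).length ≤ c₂.length ∨ c₂.length + (v k₂).length ≤ c₁.length ∨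
      (c₁ = c₂ ∧ k₁ = k₂ ∧ d₁ = d₂) := by
  rcases le_total c₁.length c₂.length with h | h
  · exact disj_aux hv hw hz h₁ h₂ h
  · rcases disj_aux hv hw hz h₂ h₁ h with h' | h' | ⟨ha, hb, hc⟩
    · exact Or.inr (Or.inl h')
    · exact Or.inl h'
    · exact Or.inr (Or.inr ⟨ha.symm, hb.symm, hc.symm⟩)



def glue : List (List A) → List (List A) → List A
  | [], _ => []
  | a :: _, [] => a
  | a :: as, y :: ys => a ++ (y ++ glue as ys)

lemma glue_len : ∀ (ys as : List (List A)), as.length = ys.length + 1 →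
    (glue as ys).length = (as.map List.length).sum + (ys.map List.length).sum := by
  intro ys
  induction ys with
  | nil =>
    intro as h
    obtain ⟨a, rfl⟩ := List.length_eq_one_iff.mp (by simpa using h)
    simp [glue]
  | cons y yt ih =>
    intro as h
    cases as with
    | nil => simp at h
    | cons a as' =>
      have := ih as' (by simpa using h)
      simp [glue, this]
      omega

lemma mem_glue : ∀ (as ys : List (List A)) (x : A), x ∈ glue as ys →
    (∃ a ∈ as, x ∈ a) ∨ (∃ y ∈ ys, x ∈ y)
  | [], _, x, h => by simp [glue] at h
  | a :: as, [], x, h => Or.inl ⟨a, by simp, h⟩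
  | a :: as, y :: ys, x, h => by
    simp only [glue, List.mem_append] at h
    rcases h with h | h | h
    · exact Or.inl ⟨a, by simp, h⟩
    · exact Or.inr ⟨y, by simp, h⟩
    · rcases mem_glue as ys x h with ⟨a', ha, hx⟩ | ⟨y', hy, hx⟩
      · exact Or.inl ⟨a', by simp [ha], hx⟩
      · exact Or.inr ⟨y', by simp [hy], hx⟩

lemma mem_glue_gap : ∀ (ys as : List (List A)), as.length = ys.length + 1 →
    ∀ a ∈ as, ∀ x ∈ a, x ∈ glue as ys := by
  intro ys
  induction ys with
  | nil =>
    intro as h a ha x hx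
    obtain ⟨b, rfl⟩ := List.length_eq_one_iff.mp (by simpa using h)
    simp at ha
    subst ha
    exact hx
  | cons y yt ih =>
    intro as h a ha x hx
    cases as with
    | nil => simp at h
    | cons b as' =>
      simp only [List.mem_cons] at ha
      simp only [glue, List.mem_append]
      rcases ha with rfl | ha
      · exact Or.inl hx
      · exact Or.inr (Or.inr (ih as' (by simpa using h) a ha x hx))

lemma len_le_sum : ∀ (l : List (List A)), (∀ y ∈ l, y ≠ []) →
    l.length ≤ (l.map List.length).sum := by
  intro l
  induction l with
  | nil => simp
  | cons a l ih =>
    intro h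
    have h1 : 1 ≤ a.length := List.length_pos_iff.mpr (h a (by simp))
    have h2 := ih (fun y hy => h y (by simp [hy]))
    simp only [List.length_cons, List.map_cons, List.sum_cons]
    omega

lemma sum_le_mul {M : ℕ} : ∀ (l : List (List A)), (∀ y ∈ l, y.length ≤ M) →
    (l.map List.length).sum ≤ l.length * M := by
  intro l
  induction l with
  | nil => simp
  | cons a l ih =>
    intro h
    have h1 := h a (by simp)
    have h2 := ih (fun y hy => h y (by simp [hy]))
    simp only [List.length_cons, List.map_cons, List.sum_cons]
    calc a.length + (l.map List.length).sum ≤ M + l.length * M := by omega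
      _ = (l.length + 1) * M := by ring

lemma finite_bdd (S : Set A) (hS : S.Finite) :
    ∀ n, {l : List A | l.length ≤ n ∧ ∀ x ∈ l, x ∈ S}.Finite := by
  intro n
  induction n with
  | zero =>
    apply Set.Finite.subset (Set.finite_singleton ([] : List A))
    rintro l ⟨h1, _⟩
    simp [List.length_eq_zero_iff.mp (Nat.le_zero.mp h1)]
  | succ n ih =>
    apply Set.Finite.subset ((Set.finite_singleton ([] : List A)).union
      (Set.Finite.image2 List.cons hS ih))
    rintro l ⟨h1, h2⟩
    cases l with
    | nil => exact Or.inl rfl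
    | cons x t =>
      refine Or.inr (Set.mem_image2_of_mem (h2 x (by simp)) ?_)
      exact ⟨by simpa using h1, fun y hy => h2 y (by simp [hy])⟩


lemma update_decomp {m : ℕ} (v : Fin m → List A) (l : Fin m) :
    ∀ (ys' as ys : List (List A)) (c d : List A) (k : Fin m),
      as.length = ys.length + 1 → ys.length = ys'.length →
      (∀ y ∈ ys, ∃ j, y = v j) → (∀ y ∈ ys', ∃ j, y = v j) →
      glue as ys' = c ++ v k ++ d →
      (∀ (c₂ d₂ : List A) (k₂ : Fin m), glue as ys' = c₂ ++ v k₂ ++ d₂ →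
        c.length + (v k).length ≤ c₂.length ∨ c₂.length + (v k₂).length ≤ c.length ∨
          (c = c₂ ∧ k = k₂ ∧ d = d₂)) →
      ∃ as₂ ys₂ ys₂', as₂.length = ys₂.length + 1 ∧ ys₂.length = ys₂'.length ∧
        (∀ y ∈ ys₂, ∃ j, y = v j) ∧ (∀ y ∈ ys₂', ∃ j, y = v j) ∧
        glue as₂ ys₂ = glue as ys ∧ glue as₂ ys₂' = c ++ v l ++ d := by
  intro ys'
  induction ys' with
  | nil =>
    intro as ys c d k h1 h2 hys hys' hocc _D
    have hys0 : ys = [] := List.length_eq_zero_iff.mp (by simpa using h2)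
    subst hys0
    obtain ⟨a, rfl⟩ := List.length_eq_one_iff.mp (by simpa using h1)
    refine ⟨[c, d], [v k], [v l], by simp, by simp,
      ?_, ?_, ?_, ?_⟩
    · intro y hy; simp at hy; exact ⟨k, hy⟩
    · intro y hy; simp at hy; exact ⟨l, hy⟩
    · show c ++ (v k ++ d) = a
      have : glue [a] ([] : List (List A)) = a := rfl
      rw [this] at hocc
      simp [hocc, List.append_assoc]
    · show c ++ (v l ++ d) = c ++ v l ++ d
      simp [List.append_assoc]
  | cons y' yt' ih =>
    intro as ys c d k h1 h2 hys hys' hocc D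
    cases as with
    | nil => simp at h1
    | cons a as' =>
    cases ys with
    | nil => simp at h2
    | cons yy yt =>
    obtain ⟨k₁, hk₁⟩ := hys' y' (by simp)
    have hDes : glue (a :: as') (y' :: yt') = a ++ v k₁ ++ glue as' yt' := by
      show a ++ (y' ++ glue as' yt') = _
      rw [hk₁]; simp [List.append_assoc]
    rcases D a (glue as' yt') k₁ hDes with hL | hR | ⟨hc, hk, hd⟩
    · -- occurrence inside gap a
      have hocc' : (c ++ v k) ++ d = a ++ (y' ++ glue as' yt') := by
        have : glue (a :: as') (y' :: yt') = a ++ (y' ++ glue as' yt') := rfl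
        rw [this] at hocc
        simpa [List.append_assoc] using hocc.symm
      obtain ⟨e, hae, hde⟩ := split_of_le hocc' (by simpa using hL)
      refine ⟨c :: e :: as', v k :: yy :: yt, v l :: y' :: yt', by simpa using h1,
        by simpa using h2, ?_, ?_, ?_, ?_⟩
      · intro yq hyq; simp only [List.mem_cons] at hyq
        rcases hyq with rfl | h | h
        · exact ⟨k, rfl⟩
        · obtain ⟨j, hj⟩ := hys yy (by simp); exact ⟨j, h.trans hj⟩
        · exact hys yq (by simp [h])
      · intro yq hyq; simp only [List.mem_cons] at hyq
        rcases hyq with rfl | h | h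
        · exact ⟨l, rfl⟩
        · obtain ⟨j, hj⟩ := hys' y' (by simp); exact ⟨j, h.trans hj⟩
        · exact hys' yq (by simp [h])
      · show c ++ (v k ++ (e ++ (yy ++ glue as' yt))) = a ++ (yy ++ glue as' yt)
        rw [hae]; simp [List.append_assoc]
      · show c ++ (v l ++ (e ++ (y' ++ glue as' yt'))) = c ++ v l ++ d
        rw [hde]; simp [List.append_assoc]
    · -- occurrence inside the rest
      have hocc' : a ++ (y' ++ glue as' yt') = c ++ (v k ++ d) := by
        have : glue (a :: as') (y' :: yt') = a ++ (y' ++ glue as' yt') := rfl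
        rw [this] at hocc
        simpa [List.append_assoc] using hocc
      have hlen1 : a.length ≤ c.length := le_trans (Nat.le_add_right _ _) hR
      obtain ⟨e, hce, h3⟩ := split_of_le hocc' hlen1
      have hcelen := congrArg List.length hce
      simp only [List.length_append] at hcelen
      have h4 : y'.length ≤ e.length := by rw [hk₁]; omega
      obtain ⟨c', hec, h5⟩ := split_of_le h3 h4
      have heclen := congrArg List.length hec
      simp only [List.length_append] at heclen
      have D' : ∀ (c₂ d₂ : List A) (k₂ : Fin m), glue as' yt' = c₂ ++ v k₂ ++ d₂ →
          c'.length + (v k).length ≤ c₂.length ∨ c₂.length + (v k₂).length ≤ c'.length ∨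
            (c' = c₂ ∧ k = k₂ ∧ d = d₂) := by
        intro c₂ d₂ k₂ h6
        have h7 : glue (a :: as') (y' :: yt') = (a ++ (y' ++ c₂)) ++ v k₂ ++ d₂ := by
          show a ++ (y' ++ glue as' yt') = _
          rw [h6]; simp [List.append_assoc]
        rcases D _ _ _ h7 with hx | hx | ⟨hx1, hx2, hx3⟩
        · left
          simp only [List.length_append] at hx
          have hkl1 := congrArg List.length hk₁
          omega
        · right; left
          simp only [List.length_append] at hx
          have hkl1 := congrArg List.length hk₁
          omega
        · right; right
          refine ⟨?_, hx2, hx3⟩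
          have t : c = a ++ (y' ++ c') := by rw [hce, hec]
          have : a ++ (y' ++ c') = a ++ (y' ++ c₂) := by rw [← t]; exact hx1
          exact List.append_cancel_left (List.append_cancel_left this)
      have h5' : glue as' yt' = c' ++ v k ++ d := by
        rw [h5]; simp [List.append_assoc]
      obtain ⟨as₂, ys₂, ys₂', g1, g2, g3, g4, g5, g6⟩ :=
        ih as' yt c' d k (by simpa using h1) (by simpa using h2)
          (fun y hy => hys y (by simp [hy])) (fun y hy => hys' y (by simp [hy])) h5' D'
      refine ⟨a :: as₂, yy :: ys₂, y' :: ys₂', by simpa using g1, by simpa using g2,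
        ?_, ?_, ?_, ?_⟩
      · intro yq hyq; simp only [List.mem_cons] at hyq
        rcases hyq with h | h
        · obtain ⟨j, hj⟩ := hys yy (by simp); exact ⟨j, h.trans hj⟩
        · exact g3 yq h
      · intro yq hyq; simp only [List.mem_cons] at hyq
        rcases hyq with h | h
        · obtain ⟨j, hj⟩ := hys' y' (by simp); exact ⟨j, h.trans hj⟩
        · exact g4 yq h
      · show a ++ (yy ++ glue as₂ ys₂) = a ++ (yy ++ glue as' yt)
        rw [g5]
      · show a ++ (y' ++ glue as₂ ys₂') = c ++ v l ++ d
        rw [g6, hce, hec]; simp [List.append_assoc]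
    · -- exact slot
      refine ⟨a :: as', yy :: yt, v l :: yt', h1, by simpa using h2, hys, ?_, rfl, ?_⟩
      · intro yq hyq; simp only [List.mem_cons] at hyq
        rcases hyq with rfl | h
        · exact ⟨l, rfl⟩
        · exact hys' yq (by simp [h])
      · show a ++ (v l ++ glue as' yt') = c ++ v l ++ d
        rw [hc, ← hd]; simp [List.append_assoc]


lemma eqrel_mono {π π' : List A → List A → Prop} (h : ∀ x y, π x y → π' x y)
    {a b : List A} (hab : EqRel π a b) : EqRel π' a b := by
  refine Relation.ReflTransGen.mono ?_ a b hab
  rintro x y ⟨r, s, p, q, h1, h2, h3⟩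
  exact ⟨r, s, p, q, h1, h2, h3.imp (h _ _) (h _ _)⟩

lemma eqrel_lift {π : List A → List A → Prop} (a b : List A) {x y : List A}
    (h : EqRel π x y) : EqRel π (a ++ x ++ b) (a ++ y ++ b) := by
  induction h with
  | refl => exact Relation.ReflTransGen.refl
  | tail _ hstep ih =>
    refine Relation.ReflTransGen.tail ih ?_
    obtain ⟨r, s, p, q, h1, h2, h3⟩ := hstep
    exact ⟨a ++ r, s ++ b, p, q, by simp [h1, List.append_assoc],
      by simp [h2, List.append_assoc], h3⟩

theorem cdl {m : ℕ} (v : Fin m → List A) (hv : Function.Injective v)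
    (w : List A) (hw : SFRel (FamilyRel v) w) :
    {z | EqRel (FamilyRel v) w z}.Finite := by
  classical
  by_cases hpair : ∃ k l : Fin m, k < l
  · by_cases hemp : ∃ k : Fin m, v k = []
    · exfalso
      obtain ⟨k, hk⟩ := hemp
      obtain ⟨k0, l0, hkl⟩ := hpair
      have hex : ∃ l : Fin m, k ≠ l := by
        by_cases h : k = k0
        · exact ⟨l0, by rw [h]; exact ne_of_lt hkl⟩
        · exact ⟨k0, h⟩
      obtain ⟨l, hne⟩ := hex
      have hvl : v l ≠ [] := fun h => hne (hv (hk.trans h.symm))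
      have s1 : OneStep (FamilyRel v) w (w ++ v l) := by
        have := step_vv (v := v) hne w []
        simpa [hk] using this
      have s2 : OneStep (FamilyRel v) (w ++ v l) (w ++ v l ++ v l) := by
        have := step_vv (v := v) hne (w ++ v l) []
        simpa [hk] using this
      have hz : EqRel (FamilyRel v) w (w ++ v l ++ v l) :=
        Relation.ReflTransGen.tail (Relation.ReflTransGen.single s1) s2
      exact hvl (hw _ hz w (v l) [] (by simp))
    · -- main case: all rule words nonempty
      have hne_all : ∀ j : Fin m, v j ≠ [] := fun j hj => hemp ⟨j, hj⟩
      have inv : ∀ z, EqRel (FamilyRel v) w z →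
          ∃ as ys ys', as.length = ys.length + 1 ∧ ys.length = ys'.length ∧
            (∀ y ∈ ys, ∃ j, y = v j) ∧ (∀ y ∈ ys', ∃ j, y = v j) ∧
            glue as ys = w ∧ glue as ys' = z := by
        intro z hz
        induction hz with
        | refl => exact ⟨[w], [], [], by simp, rfl, by simp, by simp, rfl, rfl⟩
        | @tail b c hb hstep ih =>
          obtain ⟨as, ys, ys', e1, e2, e3, e4, e5, e6⟩ := ih
          obtain ⟨r, s, p, q, hx, hy, hor⟩ := hstep
          have hkl : ∃ k l : Fin m, p = v k ∧ q = v l := by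
            rcases hor with ⟨i, j, _, hp, hq⟩ | ⟨i, j, _, hq, hp⟩
            · exact ⟨i, j, hp, hq⟩
            · exact ⟨j, i, hp, hq⟩
          obtain ⟨k, l, rfl, rfl⟩ := hkl
          have hocc : glue as ys' = r ++ v k ++ s := by rw [e6]; exact hx
          have D : ∀ (c₂ d₂ : List A) (k₂ : Fin m), glue as ys' = c₂ ++ v k₂ ++ d₂ →
              r.length + (v k).length ≤ c₂.length ∨ c₂.length + (v k₂).length ≤ r.length ∨
                (r = c₂ ∧ k = k₂ ∧ s = d₂) := by
            intro c₂ d₂ k₂ h6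
            exact disj hv hw hb hx (by rw [← e6]; exact h6)
          obtain ⟨as₂, ys₂, ys₂', g1, g2, g3, g4, g5, g6⟩ :=
            update_decomp v l ys' as ys r s k e1 e2 e3 e4 hocc D
          exact ⟨as₂, ys₂, ys₂', g1, g2, g3, g4, g5.trans e5, g6.trans hy.symm⟩
      -- finiteness from the invariant
      set M := Finset.univ.sup (fun k : Fin m => (v k).length) with hM
      have hMle : ∀ k : Fin m, (v k).length ≤ M := fun k =>
        Finset.le_sup (f := fun k : Fin m => (v k).length) (Finset.mem_univ k)
      set S : Set A := {x | x ∈ w} ∪ ⋃ k : Fin m, {x | x ∈ v k} with hSdef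
      have hS : S.Finite :=
        (w.finite_toSet).union (Set.finite_iUnion fun k => (v k).finite_toSet)
      apply Set.Finite.subset (finite_bdd S hS (w.length + w.length * M))
      intro z hz
      obtain ⟨as, ys, ys', e1, e2, e3, e4, e5, e6⟩ := inv z hz
      have hlen1 : as.length = ys'.length + 1 := by omega
      constructor
      · have hw1 := glue_len ys as e1
        have hw2 := glue_len ys' as (by omega)
        rw [e5] at hw1
        rw [e6] at hw2
        have hys'M : (ys'.map List.length).sum ≤ ys'.length * M :=
          sum_le_mul ys' (fun y hy => by obtain ⟨j, hj⟩ := e4 y hy; rw [hj]; exact hMle j)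
        have hysn : ys.length ≤ (ys.map List.length).sum :=
          len_le_sum ys (fun y hy => by obtain ⟨j, hj⟩ := e3 y hy; rw [hj]; exact hne_all j)
        have h7 : ys'.length * M ≤ w.length * M :=
          Nat.mul_le_mul_right M (by omega)
        omega
      · intro x hx
        rw [← e6] at hx
        rcases mem_glue as ys' x hx with ⟨a, ha, hxa⟩ | ⟨y, hy, hxy⟩
        · left
          have := mem_glue_gap ys as e1 a ha x hxa
          rw [e5] at this
          exact this
        · right
          obtain ⟨j, hj⟩ := e4 y hy
          exact Set.mem_iUnion.mpr ⟨j, by rw [← hj]; exact hxy⟩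
  · -- no pair: classes are singletons
    have hstep : ∀ z, EqRel (FamilyRel v) w z → z = w := by
      intro z hz
      induction hz with
      | refl => rfl
      | tail _ hstep ih =>
        exfalso
        obtain ⟨r, s, p, q, _, _, hor⟩ := hstep
        rcases hor with ⟨i, j, hij, _, _⟩ | ⟨i, j, hij, _, _⟩ <;> exact hpair ⟨i, j, hij⟩
    exact (Set.finite_singleton w).subset (fun z hz => hstep z hz)



/-- if `D̄_σ` (closure of `D_σ` under `=_ρ`) is infinite, every word
square-free relative to `π = σ ∪ ρ` has a finite equivalence class. -/
theorem finite_class_of_infinite_closure {A : Type*} {nu nv : ℕ}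
    (u : Fin nu → List A) (v : Fin nv → List A)
    (hu : Function.Injective u) (hv : Function.Injective v)
    (σ ρ : List A → List A → Prop) (hσ : σ = FamilyRel u) (hρ : ρ = FamilyRel v)
    (hinf : (ClosureD σ ρ).Infinite) :
    ∀ w : List A, SFRel (PiRel σ ρ) w → {z | EqRel (PiRel σ ρ) w z}.Finite := by

  subst hσ hρ
  intro w hw
  have h1 : ∃ i0 : Fin nu, {z | EqRel (FamilyRel v) (u i0) z}.Infinite := by
    by_contra h
    push_neg at h
    have hfin : (⋃ i : Fin nu, {z | EqRel (FamilyRel v) (u i) z}).Finite :=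
      Set.finite_iUnion (fun i => h i)
    refine hinf (hfin.subset ?_)
    rintro x ⟨w', hw', hx⟩
    obtain ⟨y, hy | hy⟩ := hw'
    · obtain ⟨i, j, _, hp, _⟩ := hy
      exact Set.mem_iUnion.mpr ⟨i, by rw [← hp]; exact hx⟩
    · obtain ⟨i, j, _, _, hq⟩ := hy
      exact Set.mem_iUnion.mpr ⟨j, by rw [← hq]; exact hx⟩
  obtain ⟨i0, hi0⟩ := h1
  have h2 : ¬ SFRel (FamilyRel v) (u i0) := fun hsf => hi0 (cdl v hv _ hsf)
  have h3 : ∃ z0, EqRel (FamilyRel v) (u i0) z0 ∧ ¬ IsSquareFreeWord z0 := by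
    by_contra h
    push_neg at h
    exact h2 (fun z hz => h z hz)
  obtain ⟨z0, hz0, hnsq⟩ := h3
  obtain ⟨p, t, q, hz0eq, ht⟩ : ∃ p t q : List A, z0 = p ++ t ++ t ++ q ∧ t ≠ [] := by
    unfold IsSquareFreeWord at hnsq
    push_neg at hnsq
    obtain ⟨p, t, q, ha, hb⟩ := hnsq
    exact ⟨p, t, q, ha, hb⟩
  have claim : ∀ z, EqRel (PiRel (FamilyRel u) (FamilyRel v)) w z →
      ∀ (i : Fin nu) (a b : List A), z ≠ a ++ u i ++ b := by
    intro z hz i a b hctr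
    have step1 : EqRel (PiRel (FamilyRel u) (FamilyRel v)) w (a ++ u i0 ++ b) := by
      by_cases h : i = i0
      · rw [← h, ← hctr]; exact hz
      · refine Relation.ReflTransGen.tail hz ⟨a, b, u i, u i0, hctr, rfl, ?_⟩
        rcases lt_or_gt_of_ne h with hlt | hgt
        · exact Or.inl (Or.inl ⟨i, i0, hlt, rfl, rfl⟩)
        · exact Or.inr (Or.inl ⟨i0, i, hgt, rfl, rfl⟩)
    have step2 : EqRel (PiRel (FamilyRel u) (FamilyRel v)) w (a ++ z0 ++ b) :=
      Relation.ReflTransGen.trans step1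
        (eqrel_mono (fun x y hxy => Or.inr hxy) (eqrel_lift a b hz0))
    have hsq := hw _ step2
    exact ht (hsq (a ++ p) t (q ++ b) (by rw [hz0eq]; simp [List.append_assoc]))
  have hsub : ∀ z, EqRel (PiRel (FamilyRel u) (FamilyRel v)) w z →
      EqRel (FamilyRel v) w z := by
    intro z hz
    induction hz with
    | refl => exact Relation.ReflTransGen.refl
    | @tail b c hb hstep ih =>
      obtain ⟨r, s, p', q', hx, hy, hor⟩ := hstep
      have hor' : FamilyRel v p' q' ∨ FamilyRel v q' p' := by
        rcases hor with (h | h) | (h | h)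
        · exfalso; obtain ⟨i, j, _, hp, _⟩ := h
          exact claim b hb i r s (by rw [hx, hp])
        · exact Or.inl h
        · exfalso; obtain ⟨i, j, _, _, hq⟩ := h
          exact claim b hb j r s (by rw [hx, hq])
        · exact Or.inr h
      exact Relation.ReflTransGen.tail ih ⟨r, s, p', q', hx, hy, hor'⟩
  have hwρ : SFRel (FamilyRel v) w :=
    fun z hz => hw z (eqrel_mono (fun x y hxy => Or.inr hxy) hz)
  exact (cdl v hv w hwρ).subset (fun z hz => hsub z hz)

end SqFreePaper
end

section
/- Let π = σ ∪ ρ with D̄_σ and D̄_ρ both finite. If D̄_σ ∩ D̄_ρ ≠ ∅, or D_σ = ∅, or D_ρ = ∅, then the congruence =_π coincides with the congruence generated by the single-family system {(w_i,w_j) : 1 ≤ i < j ≤ k} where {w_1,…,w_k} = D̄_σ ∪ D̄_ρ; hence every word square-free relative to π has a finite equivalence class. -/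
namespace SqFreePaper

variable {A : Type*}

section Aux

theorem oneStep_mono {r r' : List A → List A → Prop} (h : ∀ a b, r a b → r' a b)
    {x y : List A} (hxy : OneStep r x y) : OneStep r' x y := by
  obtain ⟨p, q, a, b, h1, h2, h3⟩ := hxy
  exact ⟨p, q, a, b, h1, h2, h3.imp (h _ _) (h _ _)⟩

theorem eqRel_mono {r r' : List A → List A → Prop} (h : ∀ a b, r a b → r' a b)
    {x y : List A} (hxy : EqRel r x y) : EqRel r' x y :=
  Relation.ReflTransGen.mono (fun _ _ hab => oneStep_mono h hab) _ _ hxy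

theorem oneStep_symm {r : List A → List A → Prop} {x y : List A}
    (hxy : OneStep r x y) : OneStep r y x := by
  obtain ⟨p, q, a, b, h1, h2, h3⟩ := hxy
  exact ⟨p, q, b, a, h2, h1, h3.symm⟩

theorem eqRel_symm {r : List A → List A → Prop} {x y : List A}
    (hxy : EqRel r x y) : EqRel r y x :=
  by haveI : Std.Symm (OneStep r) := ⟨fun _ _ h => oneStep_symm h⟩; exact Relation.ReflTransGen.symmetric.symm _ _ hxy

theorem eqRel_single {r : List A → List A → Prop} {a b : List A} (h : r a b) :
    EqRel r a b :=
  Relation.ReflTransGen.single ⟨[], [], a, b, by simp, by simp, Or.inl h⟩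

theorem oneStep_append {r : List A → List A → Prop} {a b : List A}
    (h : OneStep r a b) (p q : List A) : OneStep r (p ++ a ++ q) (p ++ b ++ q) := by
  obtain ⟨r1, s1, u1, v1, h1, h2, h3⟩ := h
  exact ⟨p ++ r1, s1 ++ q, u1, v1, by simp [h1, List.append_assoc],
    by simp [h2, List.append_assoc], h3⟩

theorem eqRel_append {r : List A → List A → Prop} {a b : List A}
    (h : EqRel r a b) (p q : List A) : EqRel r (p ++ a ++ q) (p ++ b ++ q) := by
  induction h with
  | refl => exact Relation.ReflTransGen.refl
  | tail _ hbc ih => exact ih.tail (oneStep_append hbc p q)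

theorem prefix_split {p X p' Y : List A} (h : p ++ X = p' ++ Y)
    (hle : p.length ≤ p'.length) : ∃ x, p' = p ++ x ∧ X = x ++ Y := by
  have h1 : p <+: p' ++ Y := ⟨X, h⟩
  have h2 : p <+: p' := List.prefix_of_prefix_length_le h1 ⟨Y, rfl⟩ hle
  obtain ⟨x, hx⟩ := h2
  refine ⟨x, hx.symm, ?_⟩
  rw [← hx, List.append_assoc] at h
  exact List.append_cancel_left h

/-- The single-family relation determined by a set `D`. -/
def TRel (D : Set (List A)) (a b : List A) : Prop := a ∈ D ∧ b ∈ D ∧ a ≠ b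

/-- Occurrences of elements of `D` in `z` are pairwise disjoint or equal. -/
def NoOvl (D : Set (List A)) (z : List A) : Prop :=
  ∀ p f q p' f' q' : List A, z = p ++ f ++ q → z = p' ++ f' ++ q' → f ∈ D → f' ∈ D →
    p.length + f.length ≤ p'.length ∨ p'.length + f'.length ≤ p.length ∨
      (p = p' ∧ f = f' ∧ q = q')

theorem noOvl_aux {D : Set (List A)} {z : List A}
    (hz : IsSquareFreeWord z)
    (hnb : ∀ z', OneStep (TRel D) z z' → IsSquareFreeWord z')
    {p f q p' f' q' : List A} (h1 : z = p ++ f ++ q) (h2 : z = p' ++ f' ++ q')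
    (hf : f ∈ D) (hf' : f' ∈ D) (hle : p.length ≤ p'.length) :
    p.length + f.length ≤ p'.length ∨ p'.length + f'.length ≤ p.length ∨
      (p = p' ∧ f = f' ∧ q = q') := by
  rw [List.append_assoc] at h1 h2
  have h := h1.symm.trans h2
  rcases eq_or_lt_of_le hle with heq | hlt
  · obtain ⟨hp, hfq⟩ := List.append_inj h heq
    subst hp
    rcases lt_trichotomy f.length f'.length with hl | hl | hl
    · obtain ⟨t, hft, hq⟩ := prefix_split hfq (le_of_lt hl)
      have hne : f ≠ f' := fun hc => by rw [hc] at hl; omega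
      have hstep : OneStep (TRel D) z (p ++ f' ++ q) :=
        ⟨p, q, f, f', by rw [h1, List.append_assoc], rfl, Or.inl ⟨hf, hf', hne⟩⟩
      have hsq := hnb _ hstep (p ++ f) t q' (by rw [hft, hq]; simp)
      rw [hsq, List.append_nil] at hft
      exact absurd hft.symm hne
    · obtain ⟨hff, hqq⟩ := List.append_inj hfq hl
      exact Or.inr (Or.inr ⟨rfl, hff, hqq⟩)
    · obtain ⟨t, hft, hq⟩ := prefix_split hfq.symm (le_of_lt hl)
      have hne : f' ≠ f := fun hc => by rw [hc] at hl; omega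
      have hstep : OneStep (TRel D) z (p ++ f ++ q') :=
        ⟨p, q', f', f, by rw [h2, List.append_assoc], rfl, Or.inl ⟨hf', hf, hne⟩⟩
      have hsq := hnb _ hstep (p ++ f') t q (by rw [hft, hq]; simp)
      rw [hsq, List.append_nil] at hft
      exact absurd hft.symm hne
  · obtain ⟨x, hpx, hrest⟩ := prefix_split h (le_of_lt hlt)
    have hxne : x ≠ [] := by
      intro hc; rw [hc, List.append_nil] at hpx
      rw [hpx] at hlt; omega
    by_cases hd : p.length + f.length ≤ p'.length
    · exact Or.inl hd
    · push_neg at hd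
      have hxf : x.length ≤ f.length := by
        have := congrArg List.length hpx; simp at this; omega
      obtain ⟨y, hfxy, hrest2⟩ := prefix_split hrest.symm hxf
      by_cases hff : f = f'
      · have heqz : z = p ++ x ++ x ++ (y ++ q') := by
          rw [h2, hpx, ← hff, hfxy]; simp [List.append_assoc]
        exact absurd (hz p x (y ++ q') (by rw [heqz])) hxne
      · have hstep : OneStep (TRel D) z (p' ++ f ++ q') :=
          ⟨p', q', f', f, by rw [h2, List.append_assoc], rfl,
            Or.inl ⟨hf', hf, fun hc => hff hc.symm⟩⟩
        have hsq := hnb _ hstep p x (y ++ q')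
          (by rw [hpx, hfxy]; simp [List.append_assoc])
        exact absurd hsq hxne

theorem noOvl_of_sf {D : Set (List A)} {z : List A}
    (hz : IsSquareFreeWord z)
    (hnb : ∀ z', OneStep (TRel D) z z' → IsSquareFreeWord z') : NoOvl D z := by
  intro p f q p' f' q' h1 h2 hf hf'
  rcases le_total p.length p'.length with hle | hle
  · exact noOvl_aux hz hnb h1 h2 hf hf' hle
  · rcases noOvl_aux hz hnb h2 h1 hf' hf hle with h | h | ⟨ha, hb, hc⟩
    · exact Or.inr (Or.inl h)
    · exact Or.inl h
    · exact Or.inr (Or.inr ⟨ha.symm, hb.symm, hc.symm⟩)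

/-- `Fills D cs z`: `z` is obtained from the pattern (gap list) `cs` by inserting
elements of `D` between consecutive gaps. -/
inductive Fills (D : Set (List A)) : List (List A) → List A → Prop
  | single (c : List A) : Fills D [c] c
  | cons (c d t : List A) (cs : List (List A)) :
      d ∈ D → Fills D cs t → Fills D (c :: cs) (c ++ d ++ t)

/-- No gap of the pattern contains an occurrence of an element of `D`. -/
def GapFree (D : Set (List A)) (cs : List (List A)) : Prop :=
  ∀ c ∈ cs, ∀ α g β : List A, c = α ++ g ++ β → g ∈ D → False

theorem fills_finite {D : Set (List A)} (hD : D.Finite) (cs : List (List A)) :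
    {z | Fills D cs z}.Finite := by
  induction cs with
  | nil =>
    have h : {z : List A | Fills D [] z} = ∅ := by
      ext z; simp only [Set.mem_setOf_eq, Set.mem_empty_iff_false, iff_false]
      intro h; cases h
    rw [h]; exact Set.finite_empty
  | cons c cs ih =>
    have hsub : {z | Fills D (c :: cs) z} ⊆
        {c} ∪ ⋃ d ∈ D, (fun t => c ++ d ++ t) '' {t | Fills D cs t} := by
      intro z hz
      cases hz with
      | single => exact Or.inl rfl
      | cons _ d t _ hd ht =>
        exact Or.inr (Set.mem_biUnion hd ⟨t, ht, rfl⟩)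
    exact Set.Finite.subset ((Set.finite_singleton c).union
      (hD.biUnion fun d _ => ih.image _)) hsub

theorem noOvl_append_left {D : Set (List A)} {a t : List A} (h : NoOvl D (a ++ t)) :
    NoOvl D t := by
  intro p f q p' f' q' h1 h2 hf hf'
  have e1 : a ++ t = (a ++ p) ++ f ++ q := by rw [h1]; simp [List.append_assoc]
  have e2 : a ++ t = (a ++ p') ++ f' ++ q' := by rw [h2]; simp [List.append_assoc]
  rcases h _ _ _ _ _ _ e1 e2 hf hf' with hc | hc | ⟨ha, hb, hc⟩
  · left; simp at hc; omega
  · right; left; simp at hc; omega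
  · exact Or.inr (Or.inr ⟨List.append_cancel_left ha, hb, hc⟩)

theorem fills_step {D : Set (List A)} {cs : List (List A)} {z : List A}
    (hgf : GapFree D cs) (hz : Fills D cs z) (hno : NoOvl D z)
    {p f q f' : List A} (hzeq : z = p ++ f ++ q) (hf : f ∈ D) (hf' : f' ∈ D) :
    Fills D cs (p ++ f' ++ q) := by
  induction hz generalizing p f q f' with
  | single c => exact absurd hf (fun hfD => hgf c (List.mem_singleton_self c) p f q hzeq hfD)
  | cons c d t cs hd ht ih =>
    have hceq := hzeq
    rw [List.append_assoc, List.append_assoc] at hceq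
    rcases hno p f q c d t hzeq rfl hf hd with hcase | hcase | ⟨hp, hfd, hq⟩
    · exfalso
      obtain ⟨x, hcx, hrest⟩ := prefix_split hceq.symm (by omega)
      have hxlen : f.length ≤ x.length := by
        have := congrArg List.length hcx; simp at this; omega
      obtain ⟨γ, hxg, _⟩ := prefix_split hrest hxlen
      exact hgf c List.mem_cons_self p f γ
        (by rw [hcx, hxg, ← List.append_assoc]) hf
    · obtain ⟨x, hpx, hrest⟩ := prefix_split hceq (by omega)
      have hdlen : d.length ≤ x.length := by
        have := congrArg List.length hpx; simp at this; omega
      obtain ⟨p₁, hxp, hteq⟩ := prefix_split hrest hdlen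
      have ht' : Fills D cs (p₁ ++ f' ++ q) :=
        ih (fun c hc => hgf c (List.mem_cons_of_mem _ hc))
          (noOvl_append_left (a := c ++ d) hno)
          (by rw [hteq, List.append_assoc]) hf hf'
      have heq : p ++ f' ++ q = c ++ d ++ (p₁ ++ f' ++ q) := by
        rw [hpx, hxp]; simp [List.append_assoc]
      rw [heq]
      exact Fills.cons c d _ cs hd ht'
    · rw [hp, hq]
      exact Fills.cons c f' t cs hf' ht

theorem exists_pattern {D : Set (List A)} (hD0 : [] ∉ D) (w : List A) :
    ∃ cs, Fills D cs w ∧ GapFree D cs := by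
  classical
  suffices H : ∀ n (w : List A), w.length ≤ n → ∃ cs, Fills D cs w ∧ GapFree D cs from
    H w.length w le_rfl
  intro n
  induction n with
  | zero =>
    intro w hw
    have hwnil : w = [] := List.eq_nil_of_length_eq_zero (Nat.le_zero.mp hw)
    refine ⟨[w], Fills.single w, ?_⟩
    intro c hc α g β hceq hgD
    have hcw : c = w := by simpa using hc
    have hlen := congrArg List.length hceq
    rw [hcw, hwnil] at hlen
    simp at hlen
    have hg : g.length = 0 := by omega
    exact hD0 (by rwa [List.eq_nil_of_length_eq_zero hg] at hgD)
  | succ n ih =>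
    intro w hw
    by_cases hocc : ∃ p f q, w = p ++ f ++ q ∧ f ∈ D
    · have hP : ∃ m, ∃ p f q : List A, p.length = m ∧ w = p ++ f ++ q ∧ f ∈ D := by
        obtain ⟨p, f, q, h1, h2⟩ := hocc
        exact ⟨p.length, p, f, q, rfl, h1, h2⟩
      obtain ⟨p, f, q, hplen, hweq, hf⟩ := Nat.find_spec hP
      have hmin : ∀ p' f' q' : List A, w = p' ++ f' ++ q' → f' ∈ D →
          p.length ≤ p'.length := by
        intro p' f' q' h' hf'
        rw [hplen]
        exact Nat.find_min' hP ⟨p', f', q', rfl, h', hf'⟩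
      have hfne : f ≠ [] := fun hc => hD0 (hc ▸ hf)
      have hfpos : 0 < f.length := List.length_pos_iff.mpr hfne
      have hwlen := congrArg List.length hweq
      simp at hwlen
      obtain ⟨cs', hq, hgf'⟩ := ih q (by omega)
      refine ⟨p :: cs', by rw [hweq]; exact Fills.cons p f q cs' hf hq, ?_⟩
      intro c hc α g β hceq hgD
      rcases List.mem_cons.mp hc with rfl | hc'
      · have hocc' : w = α ++ g ++ (β ++ f ++ q) := by
          rw [hweq, hceq]; simp [List.append_assoc]
        have h1 := hmin α g (β ++ f ++ q) hocc' hgD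
        have hg : g ≠ [] := fun hc => hD0 (hc ▸ hgD)
        have h2 := congrArg List.length hceq
        simp at h2
        have hgp : 0 < g.length := List.length_pos_iff.mpr hg
        omega
      · exact hgf' c hc' α g β hceq hgD
    · refine ⟨[w], Fills.single w, ?_⟩
      intro c hc α g β hceq hgD
      have hcw : c = w := by simpa using hc
      exact hocc ⟨α, g, β, by rw [← hcw, hceq], hgD⟩

theorem main_general {D : Set (List A)} {π : List A → List A → Prop}
    (hπsub : ∀ a b, π a b → TRel D a b)
    (hconn : ∀ a ∈ D, ∀ b ∈ D, EqRel π a b)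
    (hDfin : D.Finite) :
    (∀ x y : List A, EqRel π x y ↔ EqRel (TRel D) x y) ∧
    (∀ w : List A, SFRel π w → {z | EqRel π w z}.Finite) := by
  have backward : ∀ x y : List A, EqRel (TRel D) x y → EqRel π x y := by
    intro x y h
    induction h with
    | refl => exact Relation.ReflTransGen.refl
    | tail hab hbc ih =>
      refine ih.trans ?_
      obtain ⟨r1, s1, a1, b1, h1, h2, h3⟩ := hbc
      have h4 : TRel D a1 b1 := by
        rcases h3 with h | h
        · exact h
        · exact ⟨h.2.1, h.1, fun hc => h.2.2 hc.symm⟩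
      rw [h1, h2]
      exact eqRel_append (hconn a1 h4.1 b1 h4.2.1) r1 s1
  have part1 : ∀ x y : List A, EqRel π x y ↔ EqRel (TRel D) x y :=
    fun x y => ⟨fun h => eqRel_mono hπsub h, backward x y⟩
  refine ⟨part1, ?_⟩
  intro w hw
  have hclass : {z | EqRel π w z} = {z | EqRel (TRel D) w z} := Set.ext fun z => part1 w z
  rw [hclass]
  have hsf : ∀ z, EqRel (TRel D) w z → IsSquareFreeWord z :=
    fun z h => hw z ((part1 w z).mpr h)
  by_cases hnil : ([] : List A) ∈ D
  · by_cases hex : ∃ d ∈ D, d ≠ []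
    · exfalso
      obtain ⟨d, hd, hdne⟩ := hex
      have step1 : OneStep (TRel D) w (w ++ d ++ []) :=
        ⟨w, [], [], d, by simp, rfl, Or.inl ⟨hnil, hd, fun hc => hdne hc.symm⟩⟩
      have step2 : OneStep (TRel D) (w ++ d ++ []) (w ++ d ++ [] ++ d ++ []) :=
        ⟨w ++ d ++ [], [], [], d, by simp, rfl, Or.inl ⟨hnil, hd, fun hc => hdne hc.symm⟩⟩
      have hreach : EqRel (TRel D) w (w ++ d ++ [] ++ d ++ []) :=
        (Relation.ReflTransGen.single step1).tail step2
      exact hdne (hsf _ hreach w d [] (by simp))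
    · push_neg at hex
      have hsub : {z | EqRel (TRel D) w z} ⊆ {w} := by
        intro z hz
        induction hz with
        | refl => rfl
        | tail hab hbc ih =>
          exfalso
          obtain ⟨r1, s1, a1, b1, h1, h2, h3⟩ := hbc
          rcases h3 with h | h
          · exact h.2.2 ((hex a1 h.1).trans (hex b1 h.2.1).symm)
          · exact h.2.2 ((hex b1 h.1).trans (hex a1 h.2.1).symm)
      exact (Set.finite_singleton w).subset hsub
  · obtain ⟨cs, hfw, hgf⟩ := exists_pattern hnil w
    refine (fills_finite hDfin cs).subset ?_
    intro z hz
    simp only [Set.mem_setOf_eq] at hz ⊢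
    induction hz with
    | refl => exact hfw
    | @tail b c hab hbc ih =>
      have hno : NoOvl D b := noOvl_of_sf (hsf b hab) (fun z' h' => hsf z' (hab.tail h'))
      obtain ⟨r1, s1, a1, b1, h1, h2, h3⟩ := hbc
      have h4 : TRel D a1 b1 := by
        rcases h3 with h | h
        · exact h
        · exact ⟨h.2.1, h.1, fun hc => h.2.2 hc.symm⟩
      rw [h2]
      exact fills_step hgf ih hno h1 h4.1 h4.2.1

theorem mem_dwords_family {n : ℕ} {u : Fin n → List A} {x : List A}
    (hx : x ∈ DWords (FamilyRel u)) : ∃ i, x = u i := by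
  obtain ⟨y, h | h⟩ := hx
  · obtain ⟨i, j, hij, h1, h2⟩ := h; exact ⟨i, h1⟩
  · obtain ⟨i, j, hij, h1, h2⟩ := h; exact ⟨j, h2⟩

theorem dwords_conn {n : ℕ} {u : Fin n → List A} {π : List A → List A → Prop}
    (hsub : ∀ a b, FamilyRel u a b → π a b) {x y : List A}
    (hx : x ∈ DWords (FamilyRel u)) (hy : y ∈ DWords (FamilyRel u)) : EqRel π x y := by
  obtain ⟨i, rfl⟩ := mem_dwords_family hx
  obtain ⟨j, rfl⟩ := mem_dwords_family hy
  rcases lt_trichotomy i j with h | h | h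
  · exact eqRel_single (hsub _ _ ⟨i, j, h, rfl, rfl⟩)
  · rw [h]; exact Relation.ReflTransGen.refl
  · exact eqRel_symm (eqRel_single (hsub _ _ ⟨j, i, h, rfl, rfl⟩))

theorem closure_conn {σ' ρ' π : List A → List A → Prop}
    (hdw : ∀ x ∈ DWords σ', ∀ y ∈ DWords σ', EqRel π x y)
    (hρ : ∀ a b, ρ' a b → π a b) {x y : List A}
    (hx : x ∈ ClosureD σ' ρ') (hy : y ∈ ClosureD σ' ρ') : EqRel π x y := by
  obtain ⟨wx, hwx, hrx⟩ := hx
  obtain ⟨wy, hwy, hry⟩ := hy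
  exact (eqRel_symm (eqRel_mono hρ hrx)).trans
    ((hdw _ hwx _ hwy).trans (eqRel_mono hρ hry))

end Aux

/-- if `D̄_σ ∩ D̄_ρ ≠ ∅`, or `D_σ = ∅`, or `D_ρ = ∅` (with both closures
finite), then `=_π` coincides with the congruence generated by the single-family system
pairing the elements of `D̄_σ ∪ D̄_ρ`; hence every word square-free relative to `π`
has a finite equivalence class. -/
theorem single_family_case {A : Type*} {nu nv : ℕ}
    (u : Fin nu → List A) (v : Fin nv → List A)
    (hu : Function.Injective u) (hv : Function.Injective v)
    (σ ρ : List A → List A → Prop) (hσ : σ = FamilyRel u) (hρ : ρ = FamilyRel v)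
    (hfin1 : (ClosureD σ ρ).Finite) (hfin2 : (ClosureD ρ σ).Finite)
    (hcase : (ClosureD σ ρ ∩ ClosureD ρ σ).Nonempty ∨
      DWords σ = ∅ ∨ DWords ρ = ∅) :
    (∀ x y : List A, EqRel (PiRel σ ρ) x y ↔
      EqRel (fun a b : List A =>
        a ∈ ClosureD σ ρ ∪ ClosureD ρ σ ∧ b ∈ ClosureD σ ρ ∪ ClosureD ρ σ ∧ a ≠ b) x y) ∧
    (∀ w : List A, SFRel (PiRel σ ρ) w → {z | EqRel (PiRel σ ρ) w z}.Finite) := by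
  subst hσ hρ
  have hπσ : ∀ a b, FamilyRel u a b → PiRel (FamilyRel u) (FamilyRel v) a b :=
    fun a b h => Or.inl h
  have hπρ : ∀ a b, FamilyRel v a b → PiRel (FamilyRel u) (FamilyRel v) a b :=
    fun a b h => Or.inr h
  have hconnσ : ∀ x ∈ ClosureD (FamilyRel u) (FamilyRel v),
      ∀ y ∈ ClosureD (FamilyRel u) (FamilyRel v),
      EqRel (PiRel (FamilyRel u) (FamilyRel v)) x y :=
    fun x hx y hy =>
      closure_conn (fun a ha b hb => dwords_conn hπσ ha hb) hπρ hx hy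
  have hconnρ : ∀ x ∈ ClosureD (FamilyRel v) (FamilyRel u),
      ∀ y ∈ ClosureD (FamilyRel v) (FamilyRel u),
      EqRel (PiRel (FamilyRel u) (FamilyRel v)) x y :=
    fun x hx y hy =>
      closure_conn (fun a ha b hb => dwords_conn hπρ ha hb) hπσ hx hy
  have hcross : ∀ a ∈ ClosureD (FamilyRel u) (FamilyRel v),
      ∀ b ∈ ClosureD (FamilyRel v) (FamilyRel u),
      EqRel (PiRel (FamilyRel u) (FamilyRel v)) a b := by
    intro a ha b hb
    rcases hcase with ⟨c, hc1, hc2⟩ | h0 | h0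
    · exact (hconnσ a ha c hc1).trans (hconnρ c hc2 b hb)
    · obtain ⟨wa, hwa, _⟩ := ha
      rw [h0] at hwa
      exact hwa.elim
    · obtain ⟨wb, hwb, _⟩ := hb
      rw [h0] at hwb
      exact hwb.elim
  have hconn : ∀ a ∈ ClosureD (FamilyRel u) (FamilyRel v) ∪ ClosureD (FamilyRel v) (FamilyRel u),
      ∀ b ∈ ClosureD (FamilyRel u) (FamilyRel v) ∪ ClosureD (FamilyRel v) (FamilyRel u),
      EqRel (PiRel (FamilyRel u) (FamilyRel v)) a b := by
    intro a ha b hb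
    rcases ha with ha | ha <;> rcases hb with hb | hb
    · exact hconnσ a ha b hb
    · exact hcross a ha b hb
    · exact eqRel_symm (hcross b hb a ha)
    · exact hconnρ a ha b hb
  have hπsub : ∀ a b, PiRel (FamilyRel u) (FamilyRel v) a b →
      TRel (ClosureD (FamilyRel u) (FamilyRel v) ∪ ClosureD (FamilyRel v) (FamilyRel u)) a b := by
    rintro a b (⟨i, j, hij, rfl, rfl⟩ | ⟨i, j, hij, rfl, rfl⟩)
    · refine ⟨Set.mem_union_left _ ⟨u i, ⟨u j, Or.inl ⟨i, j, hij, rfl, rfl⟩⟩,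
        Relation.ReflTransGen.refl⟩,
        Set.mem_union_left _ ⟨u j, ⟨u i, Or.inr ⟨i, j, hij, rfl, rfl⟩⟩,
          Relation.ReflTransGen.refl⟩,
        fun hc => absurd (hu hc) (ne_of_lt hij)⟩
    · refine ⟨Set.mem_union_right _ ⟨v i, ⟨v j, Or.inl ⟨i, j, hij, rfl, rfl⟩⟩,
        Relation.ReflTransGen.refl⟩,
        Set.mem_union_right _ ⟨v j, ⟨v i, Or.inr ⟨i, j, hij, rfl, rfl⟩⟩,
          Relation.ReflTransGen.refl⟩,
        fun hc => absurd (hv hc) (ne_of_lt hij)⟩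
  exact main_general hπsub hconn (hfin1.union hfin2)

end SqFreePaper
end

section
/- Let x_1,…,x_n be a linear decomposition of x and y_1,…,y_m a linear decomposition of y, and suppose x_n = x'·e and y_1 = e·y' for some words e, x', y'. Then the word z = x_1⋯x_{n-1}·x'·e·y'·y_2⋯y_m belongs to Lin(n + m + sign(|x'·y'|) − 1), where sign(t) = 0 if t = 0 and 1 otherwise. Specifically, if x' is nonempty then x_1,…,x_{n-1},x',y_1,…,y_m is a linear decomposition of z; if y' is nonempty then x_1,…,x_n,y',y_2,…,y_m is one; and if x' = y' = ∅ then x_1,…,x_{n-1},e,y_2,…,y_m is one. -/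
namespace SqFreePaper

variable {A : Type*}

section Helpers
variable {σ ρ : List A → List A → Prop}

lemma sim_refl_left {a b : List A} (h : Sim σ ρ a b) : Sim σ ρ a a := by
  rcases h with ⟨h1, _⟩ | ⟨h1, _⟩
  · exact Or.inl ⟨h1, h1⟩
  · exact Or.inr ⟨h1, h1⟩

lemma sim_of_dtau {a : List A} (h : a ∈ DTau σ ρ) : Sim σ ρ a a := by
  rcases h with h | h
  · exact Or.inl ⟨h, h⟩
  · exact Or.inr ⟨h, h⟩

lemma sim_cast {a a' b b' : List A} (h : Sim σ ρ a b) (ha : a = a') (hb : b = b') :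
    Sim σ ρ a' b' := ha ▸ hb ▸ h

lemma lin_last_sim {n : ℕ} {x p q : ℕ → List A} (H : IsLinDecomp σ ρ n x p q) :
    Sim σ ρ (p n ++ x n) (p n ++ x n) := by
  obtain ⟨hn1, hxne, ⟨u, v, hU, hV⟩, hbd, hp1, hqn, hdt⟩ := H
  rcases eq_or_lt_of_le hn1 with h1 | h1
  · have := sim_of_dtau (σ := σ) (ρ := ρ) (hdt h1.symm)
    rw [← h1, hp1] at *
    simpa using this
  · have := hU n h1 le_rfl
    rw [hqn] at this
    exact sim_refl_left (sim_cast this (by simp) rfl)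

lemma lin_first_sim {m : ℕ} {y p q : ℕ → List A} (H : IsLinDecomp σ ρ m y p q) :
    Sim σ ρ (y 1 ++ q 1) (y 1 ++ q 1) := by
  obtain ⟨hm1, hyne, ⟨u, v, hU, hV⟩, hbd, hp1, hqm, hdt⟩ := H
  rcases eq_or_lt_of_le hm1 with h1 | h1
  · have := sim_of_dtau (σ := σ) (ρ := ρ) (hdt h1.symm)
    rw [← h1] at hqm
    rw [hqm]
    simpa using this
  · have := hV 1 le_rfl h1
    rw [hp1] at this
    exact sim_refl_left (sim_cast this (by simp) rfl)

end Helpers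
lemma wordSeg_zero (f : ℕ → List A) (a : ℕ) : wordSeg f a 0 = [] := rfl

lemma wordSeg_one (f : ℕ → List A) (a : ℕ) : wordSeg f a 1 = f a := by
  simp [wordSeg]

lemma wordSeg_append (f : ℕ → List A) (a l1 l2 : ℕ) :
    wordSeg f a (l1 + l2) = wordSeg f a l1 ++ wordSeg f (a + l1) l2 := by
  have h := List.range'_append (s := a) (m := l1) (n := l2) (step := 1)
  simp only [one_mul] at h
  rw [wordSeg, wordSeg, wordSeg, ← h,
    List.map_append, List.flatten_append]

lemma wordSeg_congr {f g : ℕ → List A} {l : ℕ} (a b : ℕ)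
    (h : ∀ k, k < l → f (a + k) = g (b + k)) : wordSeg f a l = wordSeg g b l := by
  induction l generalizing a b with
  | zero => rfl
  | succ l ih =>
    rw [show l + 1 = 1 + l by omega, wordSeg_append, wordSeg_append, wordSeg_one, wordSeg_one]
    rw [show f a = g b by simpa using h 0 (by omega)]
    rw [ih (a+1) (b+1) (fun k hk => by
      have := h (k+1) (by omega)
      rwa [show a + (k+1) = a + 1 + k by omega, show b + (k+1) = b + 1 + k by omega] at this)]

lemma wordSeg_split3 (f : ℕ → List A) (n l : ℕ) (hn : 1 ≤ n) :
    wordSeg f 1 (n + l) = wordSeg f 1 (n-1) ++ f n ++ wordSeg f (n+1) l := by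
  rw [show n + l = (n-1) + 1 + l by omega, wordSeg_append, wordSeg_append, wordSeg_one,
    show 1 + (n-1) = n by omega, show 1 + (n - 1 + 1) = n + 1 by omega, List.append_assoc]
lemma glue1 {σ ρ : List A → List A → Prop} {n m : ℕ} {x y p q p' q' : ℕ → List A}
    (Hx : IsLinDecomp σ ρ n x p q) (Hy : IsLinDecomp σ ρ m y p' q')
    {e x' y' : List A} (hxn : x n = x' ++ e) (hy1 : y 1 = e ++ y') (hx' : x' ≠ []) :
    ∃ P Q, IsLinDecomp σ ρ (n + m)
      (fun j => if j < n then x j else if j = n then x' else y (j - n)) P Q := by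
  have hlast := lin_last_sim Hx
  have hfirst := lin_first_sim Hy
  obtain ⟨hn1, hxne, ⟨u, v, hU, hV⟩, hbd, hp1, hqn, hdt⟩ := Hx
  obtain ⟨hm1, hyne, ⟨u', v', hU', hV'⟩, hbd', hp'1, hq'm, hdt'⟩ := Hy
  refine ⟨(fun j => if j ≤ n then p j else if j = n+1 then [] else p' (j-n)),
          (fun j => if j < n then q j else if j = n then e else q' (j-n)),
          le_trans hn1 (Nat.le_add_right n m), ?_,
          ⟨(fun i => if i ≤ n then u i else if i = n+1 then y' ++ q' 1 else u' (i-n)),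
           (fun i => if i < n then v i else if i = n then p n ++ x' ++ e else v' (i-n)),
           ?_, ?_⟩, ?_, ?_, ?_, ?_⟩
  · -- nonempty
    intro i hi1 hi2
    simp only
    rcases lt_trichotomy i n with h | h | h
    · rw [if_pos h]; exact hxne i hi1 (le_of_lt h)
    · rw [if_neg (by omega), if_pos h]; exact hx'
    · rw [if_neg (by omega), if_neg (by omega)]
      exact hyne (i - n) (by omega) (by omega)
  · -- u-condition
    intro i hi1 hi2
    simp only
    rcases lt_trichotomy i n with h | h | h
    · have hle : i ≤ n := le_of_lt h
      have hh1 : i - 1 < n := by omega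
      simp only [if_pos h, if_pos hle, if_pos hh1]
      exact hU i hi1 hle
    · subst h
      simp only [if_pos (le_refl i), if_neg (lt_irrefl i), if_pos rfl, eq_self_iff_true, if_true,
        if_pos (show i - 1 < i by omega)]
      have hh := hU i hi1 le_rfl
      rw [hqn, hxn] at hh
      exact sim_cast hh (by simp) rfl
    · rcases eq_or_lt_of_le (show n + 1 ≤ i by omega) with h1 | h1
      · subst h1
        simp only [if_neg (show ¬ n + 1 < n by omega), if_neg (show ¬ n + 1 = n by omega),
          if_neg (show ¬ n + 1 ≤ n by omega), if_pos rfl, eq_self_iff_true, if_true,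
          if_neg (show ¬ n + 1 - 1 < n by omega), if_pos (show n + 1 - 1 = n by omega),
          Nat.add_sub_cancel_left]
        exact sim_cast hfirst (by simp) (by rw [hy1, List.append_assoc])
      · simp only [if_neg (show ¬ i < n by omega), if_neg (show ¬ i = n by omega),
          if_neg (show ¬ i ≤ n by omega), if_neg (show ¬ i = n + 1 by omega),
          if_neg (show ¬ i - 1 < n by omega), if_neg (show ¬ i - 1 = n by omega)]
        have hh := hU' (i - n) (by omega) (by omega)
        have harr : i - 1 - n = i - n - 1 := by omega
        rw [harr]
        exact hh
  · -- v-condition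
    intro i hi1 hi2
    simp only
    rcases lt_trichotomy i n with h | h | h
    · simp only [if_pos h, if_pos (le_of_lt h), if_pos (show i + 1 ≤ n by omega)]
      exact hV i hi1 h
    · subst h
      simp only [if_pos (le_refl i), if_neg (lt_irrefl i), if_pos rfl, eq_self_iff_true, if_true,
        if_neg (show ¬ i + 1 ≤ i by omega)]
      refine sim_cast hlast ?_ ?_
      · rw [hxn, List.append_assoc]
      · rw [hxn, List.append_assoc]; simp
    · rcases eq_or_lt_of_le (show n + 1 ≤ i by omega) with h1 | h1
      · subst h1
        simp only [if_neg (show ¬ n + 1 < n by omega), if_neg (show ¬ n + 1 = n by omega),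
          if_neg (show ¬ n + 1 ≤ n by omega), if_pos rfl, eq_self_iff_true, if_true, Nat.add_sub_cancel_left,
          if_neg (show ¬ n + 1 + 1 ≤ n by omega), if_neg (show ¬ n + 1 + 1 = n + 1 by omega)]
        have hh := hV' 1 le_rfl (by omega)
        rw [hp'1] at hh
        have h2 : n + 1 + 1 - n = 1 + 1 := by omega
        rw [h2]
        exact sim_cast hh (by simp) rfl
      · simp only [if_neg (show ¬ i < n by omega), if_neg (show ¬ i = n by omega),
          if_neg (show ¬ i ≤ n by omega), if_neg (show ¬ i = n + 1 by omega),
          if_neg (show ¬ i + 1 ≤ n by omega), if_neg (show ¬ i + 1 = n + 1 by omega)]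
        have hh := hV' (i - n) (by omega) (by omega)
        have harr : i + 1 - n = i - n + 1 := by omega
        rw [harr]
        exact hh
  · -- boundary
    intro i hi1 hi2
    simp only
    rcases lt_trichotomy i n with h | h | h
    · simp only [if_pos h, if_pos (show i + 1 ≤ n by omega)]
      exact hbd i hi1 h
    · subst h
      simp only [if_neg (show ¬ i + 1 ≤ i by omega), if_pos rfl, eq_self_iff_true, if_true]
      exact Or.inr trivial
    · rcases eq_or_lt_of_le (show n + 1 ≤ i by omega) with h1 | h1
      · subst h1
        simp only [if_neg (show ¬ n + 1 < n by omega), if_neg (show ¬ n + 1 = n by omega),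
          if_neg (show ¬ n + 1 + 1 ≤ n by omega), if_neg (show ¬ n + 1 + 1 = n + 1 by omega),
          Nat.add_sub_cancel_left]
        have h2 : n + 1 + 1 - n = 1 + 1 := by omega
        rw [h2]
        exact hbd' 1 le_rfl (by omega)
      · simp only [if_neg (show ¬ i < n by omega), if_neg (show ¬ i = n by omega),
          if_neg (show ¬ i + 1 ≤ n by omega), if_neg (show ¬ i + 1 = n + 1 by omega)]
        have harr : i + 1 - n = i - n + 1 := by omega
        rw [harr]
        exact hbd' (i - n) (by omega) (by omega)
  · simp only [if_pos hn1]; exact hp1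
  · simp only [if_neg (show ¬ n + m < n by omega), if_neg (show ¬ n + m = n by omega),
      Nat.add_sub_cancel_left]
    exact hq'm
  · intro h
    exact absurd h (by omega)
lemma glue2 {σ ρ : List A → List A → Prop} {n m : ℕ} {x y p q p' q' : ℕ → List A}
    (Hx : IsLinDecomp σ ρ n x p q) (Hy : IsLinDecomp σ ρ m y p' q')
    {e x' y' : List A} (hxn : x n = x' ++ e) (hy1 : y 1 = e ++ y') (hy'ne : y' ≠ []) :
    ∃ P Q, IsLinDecomp σ ρ (n + m)
      (fun j => if j ≤ n then x j else if j = n + 1 then y' else y (j - n)) P Q := by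
  have hlast := lin_last_sim Hx
  have hfirst := lin_first_sim Hy
  obtain ⟨hn1, hxne, ⟨u, v, hU, hV⟩, hbd, hp1, hqn, hdt⟩ := Hx
  obtain ⟨hm1, hyne, ⟨u', v', hU', hV'⟩, hbd', hp'1, hq'm, hdt'⟩ := Hy
  refine ⟨(fun j => if j ≤ n then p j else if j = n+1 then e else p' (j-n)),
          (fun j => if j ≤ n then q j else q' (j-n)),
          le_trans hn1 (Nat.le_add_right n m), ?_,
          ⟨(fun i => if i ≤ n then u i else if i = n+1 then y 1 ++ q' 1 else u' (i-n)),
           (fun i => if i < n then v i else if i = n then p n ++ x' else v' (i-n)),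
           ?_, ?_⟩, ?_, ?_, ?_, ?_⟩
  · -- nonempty
    intro i hi1 hi2
    simp only
    rcases le_or_gt i n with h | h
    · rw [if_pos h]; exact hxne i hi1 h
    · rcases eq_or_lt_of_le (show n + 1 ≤ i by omega) with h1 | h1
      · rw [if_neg (by omega), if_pos h1.symm]; exact hy'ne
      · rw [if_neg (by omega), if_neg (by omega)]
        exact hyne (i - n) (by omega) (by omega)
  · -- u-condition
    intro i hi1 hi2
    simp only
    rcases le_or_gt i n with h | h
    · simp only [if_pos h, if_pos (show i - 1 ≤ n by omega)]
      exact hU i hi1 h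
    · rcases eq_or_lt_of_le (show n + 1 ≤ i by omega) with h1 | h1
      · subst h1
        simp only [if_neg (show ¬ n + 1 ≤ n by omega), if_pos rfl, eq_self_iff_true, if_true,
          if_pos (show n + 1 - 1 ≤ n by omega), Nat.add_sub_cancel_left,
          show n + 1 - 1 = n by omega]
        exact sim_cast hfirst (by rw [hy1]) (by simp [hqn])
      · simp only [if_neg (show ¬ i ≤ n by omega), if_neg (show ¬ i = n + 1 by omega),
          if_neg (show ¬ i - 1 ≤ n by omega)]
        have harr : i - 1 - n = i - n - 1 := by omega
        rw [harr]
        exact hU' (i - n) (by omega) (by omega)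
  · -- v-condition
    intro i hi1 hi2
    simp only
    rcases lt_trichotomy i n with h | h | h
    · simp only [if_pos h, if_pos (le_of_lt h), if_pos (show i + 1 ≤ n by omega)]
      exact hV i hi1 h
    · subst h
      simp only [if_pos (le_refl i), if_neg (lt_irrefl i), if_pos rfl, eq_self_iff_true, if_true,
        if_neg (show ¬ i + 1 ≤ i by omega)]
      refine sim_cast hlast ?_ ?_
      · rw [hqn]; simp
      · rw [hxn, List.append_assoc]
    · rcases eq_or_lt_of_le (show n + 1 ≤ i by omega) with h1 | h1
      · subst h1
        simp only [if_neg (show ¬ n + 1 ≤ n by omega), if_pos rfl, eq_self_iff_true, if_true,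
          if_neg (show ¬ n + 1 < n by omega), if_neg (show ¬ n + 1 = n by omega),
          Nat.add_sub_cancel_left,
          if_neg (show ¬ n + 1 + 1 ≤ n by omega), if_neg (show ¬ n + 1 + 1 = n + 1 by omega)]
        have hh := hV' 1 le_rfl (by omega)
        rw [hp'1] at hh
        have h2 : n + 1 + 1 - n = 1 + 1 := by omega
        rw [h2]
        exact sim_cast hh (by rw [hy1]; simp) rfl
      · simp only [if_neg (show ¬ i ≤ n by omega), if_neg (show ¬ i = n + 1 by omega),
          if_neg (show ¬ i < n by omega), if_neg (show ¬ i = n by omega),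
          if_neg (show ¬ i + 1 ≤ n by omega), if_neg (show ¬ i + 1 = n + 1 by omega)]
        have harr : i + 1 - n = i - n + 1 := by omega
        rw [harr]
        exact hV' (i - n) (by omega) (by omega)
  · -- boundary
    intro i hi1 hi2
    simp only
    rcases lt_trichotomy i n with h | h | h
    · simp only [if_pos (le_of_lt h), if_pos (show i + 1 ≤ n by omega)]
      exact hbd i hi1 h
    · subst h
      simp only [if_pos (le_refl i)]
      exact Or.inl hqn
    · rcases eq_or_lt_of_le (show n + 1 ≤ i by omega) with h1 | h1
      · subst h1
        simp only [if_neg (show ¬ n + 1 ≤ n by omega), Nat.add_sub_cancel_left,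
          if_neg (show ¬ n + 1 + 1 ≤ n by omega), if_neg (show ¬ n + 1 + 1 = n + 1 by omega)]
        have h2 : n + 1 + 1 - n = 1 + 1 := by omega
        rw [h2]
        exact hbd' 1 le_rfl (by omega)
      · simp only [if_neg (show ¬ i ≤ n by omega), if_neg (show ¬ i + 1 ≤ n by omega),
          if_neg (show ¬ i + 1 = n + 1 by omega)]
        have harr : i + 1 - n = i - n + 1 := by omega
        rw [harr]
        exact hbd' (i - n) (by omega) (by omega)
  · simp only [if_pos hn1]; exact hp1
  · simp only [if_neg (show ¬ n + m ≤ n by omega), Nat.add_sub_cancel_left]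
    exact hq'm
  · intro h
    exact absurd h (by omega)
lemma glue3 {σ ρ : List A → List A → Prop} {n m : ℕ} {x y p q p' q' : ℕ → List A}
    (Hx : IsLinDecomp σ ρ n x p q) (Hy : IsLinDecomp σ ρ m y p' q')
    {e : List A} (hxe : x n = e) (hye : y 1 = e) :
    ∃ P Q, IsLinDecomp σ ρ (n + m - 1)
      (fun j => if j < n then x j else if j = n then e else y (j - n + 1)) P Q := by
  classical
  have hlast := lin_last_sim Hx
  have hfirst := lin_first_sim Hy
  obtain ⟨hn1, hxne, ⟨u, v, hU, hV⟩, hbd, hp1, hqn, hdt⟩ := Hx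
  obtain ⟨hm1, hyne, ⟨u', v', hU', hV'⟩, hbd', hp'1, hq'm, hdt'⟩ := Hy
  have hp'2 : ¬ q' 1 = [] → p' (1+1) = [] := by
    intro hc
    have hm2 : 1 < m := by
      rcases eq_or_lt_of_le hm1 with h1 | h1
      · exact absurd (h1 ▸ hq'm) hc
      · exact h1
    exact (hbd' 1 le_rfl hm2).resolve_left hc
  refine ⟨(fun j => if j < n then p j else if j = n then (if q' 1 = [] then [] else p n)
            else p' (j - n + 1)),
          (fun j => if j < n then q j else if j = n then [] else q' (j - n + 1)),
          by omega, ?_,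
          ⟨(fun i => if i < n then u i
              else if i = n then (if q' 1 = [] then (if q (n-1) = [] then e else u n) else u n)
              else if i = n+1 then q' 1 ++ u' (1+1) else u' (i - n + 1)),
           (fun i => if i < n then (if q' 1 = [] ∧ i = n - 1 then p i ++ x i ++ q i else v i)
              else if i = n then (if q' 1 = [] then v' 1 else p n ++ e)
              else v' (i - n + 1)),
           ?_, ?_⟩, ?_, ?_, ?_, ?_⟩
  · -- nonempty
    intro i hi1 hi2
    simp only
    rcases lt_trichotomy i n with h | h | h
    · rw [if_pos h]; exact hxne i hi1 (le_of_lt h)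
    · rw [if_neg (by omega), if_pos h]; rw [← hxe]; exact hxne n hn1 le_rfl
    · rw [if_neg (by omega), if_neg (by omega)]
      exact hyne (i - n + 1) (by omega) (by omega)
  · -- u-condition
    intro i hi1 hi2
    simp only
    rcases lt_trichotomy i n with h | h | h
    · simp only [if_pos h, if_pos (show i - 1 < n by omega)]
      exact hU i hi1 (le_of_lt h)
    · subst h
      simp only [if_neg (lt_irrefl i), if_pos rfl, eq_self_iff_true, if_true,
        if_pos (show i - 1 < i by omega)]
      by_cases hc : q' 1 = []
      · rw [if_pos hc, if_pos hc]
        by_cases hq : q (i-1) = []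
        · rw [if_pos hq, hq]
          have hEe : Sim σ ρ e e := sim_cast hfirst (by simp [hye, hc]) (by simp [hye, hc])
          exact sim_cast hEe (by simp) (by simp)
        · rw [if_neg hq]
          have hpn : p i = [] := by
            have := (hbd (i-1) (by omega) (by omega)).resolve_left hq
            rwa [show i - 1 + 1 = i by omega] at this
          have hh := hU i hi1 le_rfl
          rw [hpn, hqn, hxe] at hh
          exact sim_cast hh (by simp) rfl
      · rw [if_neg hc, if_neg hc]
        have hh := hU i hi1 le_rfl
        rw [hqn, hxe] at hh
        exact hh
    · rcases eq_or_lt_of_le (show n + 1 ≤ i by omega) with h1 | h1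
      · subst h1
        simp only [if_neg (show ¬ n + 1 < n by omega), if_neg (show ¬ n + 1 = n by omega),
          if_pos rfl, eq_self_iff_true, if_true,
          if_neg (show ¬ n + 1 - 1 < n by omega), if_pos (show n + 1 - 1 = n by omega),
          show n + 1 - n + 1 = 1 + 1 by omega]
        have hh := hU' (1+1) (by omega) (by omega)
        rw [show 1 + 1 - 1 = 1 by omega] at hh
        exact sim_cast hh rfl (by simp)
      · simp only [if_neg (show ¬ i < n by omega), if_neg (show ¬ i = n by omega),
          if_neg (show ¬ i = n + 1 by omega),
          if_neg (show ¬ i - 1 < n by omega), if_neg (show ¬ i - 1 = n by omega)]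
        have hh := hU' (i - n + 1) (by omega) (by omega)
        rw [show i - 1 - n + 1 = i - n + 1 - 1 by omega]
        exact hh
  · -- v-condition
    intro i hi1 hi2
    simp only
    rcases lt_trichotomy i n with h | h | h
    · simp only [if_pos h]
      by_cases hcc : q' 1 = [] ∧ i = n - 1
      · rw [if_pos hcc, if_neg (show ¬ i + 1 < n by omega),
          if_pos (show i + 1 = n by omega), if_pos hcc.1]
        exact sim_cast (sim_refl_left (hV i hi1 h)) rfl (by simp)
      · rw [if_neg hcc]
        rcases lt_or_eq_of_le (show i + 1 ≤ n by omega) with h2 | h2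
        · rw [if_pos h2]
          exact hV i hi1 h
        · have hc : ¬ q' 1 = [] := fun hcq => hcc ⟨hcq, by omega⟩
          rw [if_neg (show ¬ i + 1 < n by omega), if_pos h2, if_neg hc, ← h2]
          exact hV i hi1 h
    · subst h
      simp only [if_neg (lt_irrefl i), if_pos rfl, eq_self_iff_true, if_true,
        if_neg (show ¬ i + 1 < i by omega), if_neg (show ¬ i + 1 = i by omega),
        show i + 1 - i + 1 = 1 + 1 by omega]
      by_cases hc : q' 1 = []
      · rw [if_pos hc, if_pos hc]
        have hh := hV' 1 le_rfl (by omega)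
        rw [hp'1, hc, hye] at hh
        exact sim_cast hh (by simp) rfl
      · rw [if_neg hc, if_neg hc, hp'2 hc]
        have hEpe : Sim σ ρ (p i ++ e) (p i ++ e) := by
          rw [← hxe]; exact hlast
        exact sim_cast hEpe (by simp) (by simp)
    · simp only [if_neg (show ¬ i < n by omega), if_neg (show ¬ i = n by omega),
        if_neg (show ¬ i + 1 < n by omega), if_neg (show ¬ i + 1 = n by omega)]
      have hh := hV' (i - n + 1) (by omega) (by omega)
      rw [show i + 1 - n + 1 = i - n + 1 + 1 by omega]
      exact hh
  · -- boundary
    intro i hi1 hi2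
    simp only
    rcases lt_trichotomy i n with h | h | h
    · rcases lt_or_eq_of_le (show i + 1 ≤ n by omega) with h2 | h2
      · simp only [if_pos h, if_pos h2]
        exact hbd i hi1 h
      · simp only [if_pos h, if_neg (show ¬ i + 1 < n by omega), if_pos h2]
        by_cases hc : q' 1 = []
        · rw [if_pos hc]; exact Or.inr rfl
        · rw [if_neg hc]
          have := hbd i hi1 h
          rwa [h2] at this
    · subst h
      simp only [if_neg (lt_irrefl i), if_pos rfl, eq_self_iff_true, if_true]
      exact Or.inl trivial
    · simp only [if_neg (show ¬ i < n by omega), if_neg (show ¬ i = n by omega),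
        if_neg (show ¬ i + 1 < n by omega), if_neg (show ¬ i + 1 = n by omega)]
      have hh := hbd' (i - n + 1) (by omega) (by omega)
      rw [show i + 1 - n + 1 = i - n + 1 + 1 by omega]
      exact hh
  · -- P 1 = []
    rcases eq_or_lt_of_le hn1 with h1 | h1
    · simp only [← h1, if_neg (lt_irrefl 1), if_pos rfl, eq_self_iff_true, if_true]
      by_cases hc : q' 1 = []
      · rw [if_pos hc]
      · rw [if_neg hc, ← h1] at *; exact hp1
    · simp only [if_pos h1]; exact hp1
  · -- Q (n+m-1) = []
    rcases eq_or_lt_of_le hm1 with h1 | h1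
    · simp only [← h1, if_neg (show ¬ n + 1 - 1 < n by omega),
        if_pos (show n + 1 - 1 = n by omega)]
    · simp only [if_neg (show ¬ n + m - 1 < n by omega),
        if_neg (show ¬ n + m - 1 = n by omega), show n + m - 1 - n + 1 = m by omega]
      exact hq'm
  · -- degenerate
    intro h
    have hn : n = 1 := by omega
    have hm : m = 1 := by omega
    simp only [if_neg (show ¬ (1:ℕ) < n by omega), if_pos (show (1:ℕ) = n by omega)]
    rw [← hxe, hn]
    exact hdt hn
/-- Lemma 2.4: gluing two linear decompositions along a common word
`e` with `x_n = x'·e` and `y_1 = e·y'`. -/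
theorem linDecomp_glue {A : Type*} {nu nv : ℕ}
    (u : Fin nu → List A) (v : Fin nv → List A)
    (hu : Function.Injective u) (hv : Function.Injective v)
    (σ ρ : List A → List A → Prop) (hσ : σ = FamilyRel u) (hρ : ρ = FamilyRel v)
    (hset : SettingHyps σ ρ)
    (n m : ℕ) (x y : ℕ → List A)
    (hx : ∃ p q : ℕ → List A, IsLinDecomp σ ρ n x p q)
    (hy : ∃ p q : ℕ → List A, IsLinDecomp σ ρ m y p q)
    (e x' y' : List A) (hxn : x n = x' ++ e) (hy1 : y 1 = e ++ y') :
    (wordSeg x 1 (n-1) ++ x' ++ e ++ y' ++ wordSeg y 2 (m-1)) ∈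
      LinSet σ ρ (n + m + min (x' ++ y').length 1 - 1) ∧
    (x' ≠ [] → ∃ p q : ℕ → List A, IsLinDecomp σ ρ (n + m)
        (fun j => if j < n then x j else if j = n then x' else y (j - n)) p q) ∧
    (y' ≠ [] → ∃ p q : ℕ → List A, IsLinDecomp σ ρ (n + m)
        (fun j => if j ≤ n then x j else if j = n + 1 then y' else y (j - n)) p q) ∧
    (x' = [] → y' = [] → ∃ p q : ℕ → List A, IsLinDecomp σ ρ (n + m - 1)
        (fun j => if j < n then x j else if j = n then e else y (j - n + 1)) p q) := by
  obtain ⟨p, q, Hx⟩ := hx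
  obtain ⟨p', q', Hy⟩ := hy
  have hn1 : 1 ≤ n := Hx.1
  have hm1 : 1 ≤ m := Hy.1
  refine ⟨?_, fun hx0 => glue1 Hx Hy hxn hy1 hx0,
          fun hy0 => glue2 Hx Hy hxn hy1 hy0,
          fun hx0 hy0 => glue3 Hx Hy (by rw [hxn, hx0, List.nil_append])
            (by rw [hy1, hy0, List.append_nil])⟩
  simp only [LinSet, Set.mem_setOf_eq]
  by_cases hx0 : x' = []
  · by_cases hy0 : y' = []
    · -- case 3
      obtain ⟨P, Q, H3⟩ := glue3 Hx Hy (by rw [hxn, hx0, List.nil_append])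
        (by rw [hy1, hy0, List.append_nil])
      refine ⟨n + m - 1, by omega, by simp [hx0, hy0], _, P, Q, H3, ?_⟩
      rw [hx0, hy0]
      rw [show n + m - 1 = n + (m-1) by omega, wordSeg_split3 _ n (m-1) hn1]
      have h1 : wordSeg (fun j => if j < n then x j else if j = n then e else y (j - n + 1))
          1 (n-1) = wordSeg x 1 (n-1) :=
        wordSeg_congr 1 1 (fun k hk => by
          rw [if_pos (show 1 + k < n by omega)])
      have h2 : wordSeg (fun j => if j < n then x j else if j = n then e else y (j - n + 1))
          (n+1) (m-1) = wordSeg y 2 (m-1) :=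
        wordSeg_congr (n+1) 2 (fun k hk => by
          rw [if_neg (show ¬ n+1+k < n by omega), if_neg (show ¬ n+1+k = n by omega),
            show n+1+k - n + 1 = 2 + k by omega])
      rw [h1, h2]
      simp [List.append_assoc]
    · -- case 2
      obtain ⟨P, Q, H2⟩ := glue2 Hx Hy hxn hy1 hy0
      have hlen : 0 < (x' ++ y').length :=
        List.length_pos_iff.mpr (fun h => hy0 (List.append_eq_nil_iff.mp h).2)
      refine ⟨n + m, by omega, by omega, _, P, Q, H2, ?_⟩
      rw [show n + m = (n+1) + (m-1) by omega,
        wordSeg_split3 _ (n+1) (m-1) (by omega), show n + 1 - 1 = n by omega]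
      have h1 : wordSeg (fun j => if j ≤ n then x j else if j = n + 1 then y' else y (j - n))
          1 n = wordSeg x 1 n :=
        wordSeg_congr 1 1 (fun k hk => by
          rw [if_pos (show 1 + k ≤ n by omega)])
      have h2 : wordSeg (fun j => if j ≤ n then x j else if j = n + 1 then y' else y (j - n))
          (n+1+1) (m-1) = wordSeg y 2 (m-1) :=
        wordSeg_congr (n+1+1) 2 (fun k hk => by
          rw [if_neg (show ¬ n+1+1+k ≤ n by omega), if_neg (show ¬ n+1+1+k = n+1 by omega),
            show n+1+1+k - n = 2 + k by omega])
      have h4 := wordSeg_split3 x n 0 hn1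
      simp only [Nat.add_zero, wordSeg_zero, List.append_nil] at h4
      rw [h1, h2, h4]
      simp only [if_neg (show ¬ n+1 ≤ n by omega), if_pos rfl, eq_self_iff_true, if_true]
      rw [hxn, hx0]
      simp [List.append_assoc]
  · -- case 1
    obtain ⟨P, Q, H1⟩ := glue1 Hx Hy hxn hy1 hx0
    have hlen : 0 < (x' ++ y').length :=
      List.length_pos_iff.mpr (fun h => hx0 (List.append_eq_nil_iff.mp h).1)
    refine ⟨n + m, by omega, by omega, _, P, Q, H1, ?_⟩
    rw [wordSeg_split3 _ n m hn1]
    have h1 : wordSeg (fun j => if j < n then x j else if j = n then x' else y (j - n))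
        1 (n-1) = wordSeg x 1 (n-1) :=
      wordSeg_congr 1 1 (fun k hk => by
        rw [if_pos (show 1 + k < n by omega)])
    have h2 : wordSeg (fun j => if j < n then x j else if j = n then x' else y (j - n))
        (n+1) m = wordSeg y 1 m :=
      wordSeg_congr (n+1) 1 (fun k hk => by
        rw [if_neg (show ¬ n+1+k < n by omega), if_neg (show ¬ n+1+k = n by omega),
          show n+1+k - n = 1 + k by omega])
    have h3 := wordSeg_split3 y 1 (m-1) le_rfl
    rw [show 1 + (m-1) = m by omega] at h3
    simp only [Nat.sub_self, wordSeg_zero, List.nil_append] at h3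
    rw [h1, h2, h3]
    simp only [if_neg (lt_irrefl n), if_pos rfl, eq_self_iff_true, if_true]
    rw [hy1]
    simp [List.append_assoc]
end SqFreePaper
end
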